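/- arXiv:1610.07923 — 7 statements merged into one kernel-verified Lean document; each statement's English description precedes it below -/
import Mathlib

section
/- For an endomorphism φ of an infinite subshift, the limits α^+(φ) = lim_{n→∞} W^+(n, φ)/n and α^-(φ) = lim_{n→∞} W^-(n, φ)/n exist and are finite; moreover if D is at least the range of the block code of φ, then |W^+(n)| ≤ Dn and |W^-(n)| ≤ Dn for all n ≥ 0. -/
open Filter Topology

/-- The left shift on bi-infinite sequences. -/
def shift {A : Type*} (x : ℤ → A) : ℤ → A := fun n => x (n + 1)

/-- The shift by `k` places (`σ^k`). -/
def zshift {A : Type*} (k : ℤ) (x : ℤ → A) : ℤ → A := fun n => x (n + k)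

/-- A subshift: a closed, shift-invariant subset of `Σ^ℤ`. -/
def IsSubshift {A : Type*} [TopologicalSpace A] (X : Set (ℤ → A)) : Prop :=
  IsClosed X ∧ shift '' X = X

/-- An endomorphism of the subshift `X`: a continuous shift-commuting surjection of `X`. -/
structure IsEndo {A : Type*} [TopologicalSpace A] (X : Set (ℤ → A))
    (φ : (ℤ → A) → (ℤ → A)) : Prop where
  maps : Set.MapsTo φ X X
  surj : Set.SurjOn φ X X
  cont : ContinuousOn φ X
  comm : ∀ x ∈ X, φ (shift x) = shift (φ x)

/-- `S` φ-codes `T`: agreement of two points of `X` on `S` forces agreement of their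
φ-images on `T`. -/
def Codes {A : Type*} (X : Set (ℤ → A)) (φ : (ℤ → A) → (ℤ → A)) (S T : Set ℤ) : Prop :=
  ∀ x ∈ X, ∀ y ∈ X, (∀ i ∈ S, x i = y i) → ∀ j ∈ T, φ x j = φ y j

/-- The set of integers `W` such that `[0,∞)` φⁿ-codes `[W,∞)`; `W⁺(n,φ)` is its
least element. -/
def WplusSet {A : Type*} (X : Set (ℤ → A)) (φ : (ℤ → A) → (ℤ → A)) (n : ℕ) : Set ℤ :=
  {W | Codes X (φ^[n]) (Set.Ici 0) (Set.Ici W)}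

/-- The set of integers `W` such that `(-∞,0]` φⁿ-codes `(-∞,W]`; `W⁻(n,φ)` is its
greatest element. -/
def WminusSet {A : Type*} (X : Set (ℤ → A)) (φ : (ℤ → A) → (ℤ → A)) (n : ℕ) : Set ℤ :=
  {W | Codes X (φ^[n]) (Set.Iic 0) (Set.Iic W)}

/-- A subshift of finite type: defined by a finite set of excluded words. -/
def IsSFT {A : Type*} (X : Set (ℤ → A)) : Prop :=
  ∃ F : Set (List A), F.Finite ∧
    ∀ x : ℤ → A, x ∈ X ↔ ∀ (n : ℤ), ∀ w ∈ F, ∃ i : Fin w.length, x (n + i) ≠ w.get i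


section Aux
variable {A : Type*} {X : Set (ℤ → A)} {ψ : (ℤ → A) → (ℤ → A)}

lemma zshift_zshift (a b : ℤ) (x : ℤ → A) : zshift a (zshift b x) = zshift (a + b) x := by
  funext n; simp [zshift, add_assoc]

lemma zshift_one (x : ℤ → A) : zshift 1 x = shift x := rfl

lemma zshift_zero (x : ℤ → A) : zshift 0 x = x := by funext n; simp [zshift]

lemma zshift_congr {a b : ℤ} (h : a = b) (x : ℤ → A) : zshift a x = zshift b x := by rw [h]

lemma zshift_mem (hsh : shift '' X = X) (k : ℤ) {x : ℤ → A} (hx : x ∈ X) : zshift k x ∈ X := by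
  induction k using Int.induction_on with
  | zero => rwa [zshift_zero]
  | succ k ih =>
      have : zshift ((k:ℤ) + 1) x = shift (zshift k x) := by
        rw [← zshift_one, zshift_zshift, zshift_congr (by ring : (k:ℤ) + 1 = 1 + k)]
      rw [this, ← hsh]
      exact Set.mem_image_of_mem _ ih
  | pred k ih =>
      have h1 : zshift (-(k:ℤ)) x ∈ X := ih
      rw [← hsh] at h1
      obtain ⟨y, hy, hyx⟩ := h1
      have : zshift (-(k:ℤ) - 1) x = y := by
        have := congrArg (zshift (-1)) hyx
        rw [← zshift_one, zshift_zshift, zshift_zshift,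
          zshift_congr (by ring : (-1:ℤ) + 1 = 0),
          zshift_congr (by ring : (-1:ℤ) + -(k:ℤ) = -(k:ℤ) - 1), zshift_zero] at this
        exact this.symm
      rw [this]; exact hy

lemma comm_zshift (hsh : shift '' X = X)
    (hcm : ∀ x ∈ X, ψ (shift x) = shift (ψ x)) (k : ℤ) :
    ∀ x ∈ X, ψ (zshift k x) = zshift k (ψ x) := by
  induction k using Int.induction_on with
  | zero => intro x _; simp [zshift_zero]
  | succ k ih =>
      intro x hx
      have h1 : zshift ((k:ℤ) + 1) x = shift (zshift k x) := by
        rw [← zshift_one, zshift_zshift, zshift_congr (by ring : (k:ℤ) + 1 = 1 + k)]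
      rw [h1, hcm _ (zshift_mem hsh k hx), ih x hx, ← zshift_one, zshift_zshift,
        zshift_congr (by ring : (k:ℤ) + 1 = 1 + k)]
  | pred k ih =>
      intro x hx
      set y := zshift (-(k:ℤ) - 1) x with hy
      have hyX : y ∈ X := zshift_mem hsh _ hx
      have h1 : shift y = zshift (-(k:ℤ)) x := by
        rw [hy, ← zshift_one, zshift_zshift, zshift_congr (by ring : (1:ℤ) + (-(k:ℤ) - 1) = -(k:ℤ))]
      have h2 : ψ (shift y) = shift (ψ y) := hcm _ hyX
      rw [h1, ih x hx] at h2
      have h3 := congrArg (zshift (-1)) h2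
      rw [← zshift_one, zshift_zshift, zshift_zshift,
        zshift_congr (by ring : (-1:ℤ) + -(k:ℤ) = -(k:ℤ) - 1),
        zshift_congr (by ring : (-1:ℤ) + 1 = 0), zshift_zero] at h3
      rw [hy] at h3 ⊢
      exact h3.symm

/-- Translate an `Ici`-coding. -/
lemma codes_ici_translate (hsh : shift '' X = X)
    (hcm : ∀ x ∈ X, ψ (shift x) = shift (ψ x)) {W : ℤ}
    (h : Codes X ψ (Set.Ici 0) (Set.Ici W)) (k : ℤ) :
    Codes X ψ (Set.Ici k) (Set.Ici (W + k)) := by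
  intro x hx y hy hag j hj
  have hx' : zshift k x ∈ X := zshift_mem hsh k hx
  have hy' : zshift k y ∈ X := zshift_mem hsh k hy
  have hag' : ∀ i ∈ Set.Ici (0:ℤ), zshift k x i = zshift k y i := by
    intro i hi
    exact hag (i + k) (by simp at hi ⊢; omega)
  have := h _ hx' _ hy' hag' (j - k) (by simp at hj ⊢; omega)
  rw [comm_zshift hsh hcm k x hx, comm_zshift hsh hcm k y hy] at this
  simpa [zshift, sub_add_cancel] using this

lemma codes_iic_translate (hsh : shift '' X = X)
    (hcm : ∀ x ∈ X, ψ (shift x) = shift (ψ x)) {W : ℤ}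
    (h : Codes X ψ (Set.Iic 0) (Set.Iic W)) (k : ℤ) :
    Codes X ψ (Set.Iic k) (Set.Iic (W + k)) := by
  intro x hx y hy hag j hj
  have hx' : zshift k x ∈ X := zshift_mem hsh k hx
  have hy' : zshift k y ∈ X := zshift_mem hsh k hy
  have hag' : ∀ i ∈ Set.Iic (0:ℤ), zshift k x i = zshift k y i := by
    intro i hi
    exact hag (i + k) (by simp at hi ⊢; omega)
  have := h _ hx' _ hy' hag' (j - k) (by simp at hj ⊢; omega)
  rw [comm_zshift hsh hcm k x hx, comm_zshift hsh hcm k y hy] at this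
  simpa [zshift, sub_add_cancel] using this

lemma codes_icc_translate (hsh : shift '' X = X)
    (hcm : ∀ x ∈ X, ψ (shift x) = shift (ψ x)) {R : ℤ}
    (h : Codes X ψ (Set.Icc (-R) R) {0}) (k : ℤ) :
    Codes X ψ (Set.Icc (k - R) (k + R)) {k} := by
  intro x hx y hy hag j hj
  have hx' : zshift k x ∈ X := zshift_mem hsh k hx
  have hy' : zshift k y ∈ X := zshift_mem hsh k hy
  have hag' : ∀ i ∈ Set.Icc (-R) R, zshift k x i = zshift k y i := by
    intro i hi
    exact hag (i + k) (by simp at hi ⊢; omega)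
  have := h _ hx' _ hy' hag' 0 rfl
  rw [comm_zshift hsh hcm k x hx, comm_zshift hsh hcm k y hy] at this
  simp only [Set.mem_singleton_iff] at hj
  subst hj
  simpa [zshift] using this

end Aux


section Iter
variable {A : Type*} {X : Set (ℤ → A)} {φ : (ℤ → A) → (ℤ → A)}

lemma surjOn_iterate (h : Set.SurjOn φ X X) (n : ℕ) : Set.SurjOn (φ^[n]) X X := by
  induction n with
  | zero => simp [Set.SurjOn]
  | succ n ih =>
      rw [Function.iterate_succ]
      exact ih.comp h

lemma contOn_iterate [TopologicalSpace A] (hm : Set.MapsTo φ X X)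
    (h : ContinuousOn φ X) (n : ℕ) : ContinuousOn (φ^[n]) X := by
  induction n with
  | zero => simpa using continuousOn_id
  | succ n ih =>
      rw [Function.iterate_succ']
      exact h.comp ih (hm.iterate n)

lemma comm_iterate (hm : Set.MapsTo φ X X)
    (hcm : ∀ x ∈ X, φ (shift x) = shift (φ x)) (n : ℕ) :
    ∀ x ∈ X, φ^[n] (shift x) = shift (φ^[n] x) := by
  induction n with
  | zero => intro x _; simp
  | succ n ih =>
      intro x hx
      rw [Function.iterate_succ_apply, Function.iterate_succ_apply,
        hcm x hx, ih (φ x) (hm hx)]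

/-- iterated radius bound -/
lemma codes_iterate_radius (hsh : shift '' X = X) (hm : Set.MapsTo φ X X)
    (hcm : ∀ x ∈ X, φ (shift x) = shift (φ x)) {D : ℤ} (hD0 : 0 ≤ D)
    (hD : Codes X φ (Set.Icc (-D) D) {0}) (n : ℕ) :
    ∀ j : ℤ, Codes X (φ^[n]) (Set.Icc (j - D * n) (j + D * n)) {j} := by
  induction n with
  | zero =>
      intro j x hx y hy hag j' hj'
      simp only [Set.mem_singleton_iff] at hj'
      subst hj'
      simpa using hag _ (by simp)
  | succ n ih =>
      intro j x hx y hy hag j' hj'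
      simp only [Set.mem_singleton_iff] at hj'
      subst hj'
      rw [Function.iterate_succ_apply, Function.iterate_succ_apply]
      refine ih _ (φ x) (hm hx) (φ y) (hm hy) ?_ _ rfl
      intro i hi
      simp only [Set.mem_Icc] at hi
      have hrad := codes_icc_translate hsh hcm hD i
      refine hrad x hx y hy ?_ i rfl
      intro i' hi'
      simp only [Set.mem_Icc] at hi'
      refine hag i' ?_
      simp only [Set.mem_Icc]
      push_cast
      have : (D : ℤ) * (n + 1) = D * n + D := by ring
      constructor <;> linarith [hi.1, hi.2, hi'.1, hi'.2]
end Iter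

section Window
variable {A : Type*} [Fintype A] [TopologicalSpace A] [DiscreteTopology A]
  {X : Set (ℤ → A)} {ψ : (ℤ → A) → (ℤ → A)}

lemma exists_finset_codes (hcl : IsClosed X) (hc : ContinuousOn ψ X)
    (S : Set ℤ) (j : ℤ) (h : Codes X ψ S {j}) :
    ∃ F : Finset ℤ, ↑F ⊆ S ∧ Codes X ψ ↑F {j} := by
  have hXc : IsCompact X := by
    have : CompactSpace (ℤ → A) := by infer_instance
    exact hcl.isCompact
  haveI : CompactSpace ↥X := isCompact_iff_compactSpace.mp hXc
  have hcont : Continuous fun p : ↥X × ↥X => (ψ p.1.1 j, ψ p.2.1 j) := by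
    have h1 : Continuous fun x : ↥X => ψ x.1 j :=
      (continuous_apply j).comp (continuousOn_iff_continuous_restrict.mp hc)
    exact (h1.comp continuous_fst).prodMk (h1.comp continuous_snd)
  set K : Set (↥X × ↥X) := {p | ψ p.1.1 j ≠ ψ p.2.1 j} with hK
  have hKc : IsCompact K := by
    have : IsClosed K := by
      have : K = (fun p : ↥X × ↥X => (ψ p.1.1 j, ψ p.2.1 j)) ⁻¹' {q : A × A | q.1 ≠ q.2} := rfl
      rw [this]
      exact (isClosed_discrete _).preimage hcont
    exact this.isCompact
  set Z : S → Set (↥X × ↥X) := fun i => {p | p.1.1 (i : ℤ) = p.2.1 (i : ℤ)} with hZ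
  have hZc : ∀ i : S, IsClosed (Z i) :=
    fun i => isClosed_eq
      ((continuous_apply (i:ℤ)).comp (continuous_subtype_val.comp continuous_fst))
      ((continuous_apply (i:ℤ)).comp (continuous_subtype_val.comp continuous_snd))
  have hempty : (K ∩ ⋂ i : S, Z i) = ∅ := by
    ext p
    simp only [Set.mem_inter_iff, Set.mem_iInter, Set.mem_empty_iff_false, iff_false, not_and,
      hK, hZ, Set.mem_setOf_eq]
    intro hp hag
    exact hp (h p.1.1 p.1.2 p.2.1 p.2.2 (fun i hi => hag ⟨i, hi⟩) j rfl)
  obtain ⟨t, ht⟩ := hKc.elim_finite_subfamily_closed Z hZc hempty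
  refine ⟨t.image (fun i : ↥S => (i : ℤ)), ?_, ?_⟩
  · intro i hi
    simp only [Finset.coe_image, Set.mem_image, Finset.mem_coe] at hi
    obtain ⟨i', _, rfl⟩ := hi
    exact i'.2
  · intro x hx y hy hag j' hj'
    simp only [Set.mem_singleton_iff] at hj'
    subst hj'
    by_contra hne
    have hp : (⟨⟨x, hx⟩, ⟨y, hy⟩⟩ : ↥X × ↥X) ∈ K ∩ ⋂ i ∈ t, Z i := by
      refine ⟨hne, ?_⟩
      simp only [Set.mem_iInter]
      intro i hi
      exact hag (i : ℤ) (Finset.mem_coe.mpr (Finset.mem_image_of_mem _ hi))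
    rw [ht] at hp
    exact hp
end Window


section Words
variable {A : Type*}

/-- The word of length `m` starting at position `a`. -/
def wd (a : ℤ) (m : ℕ) (x : ℤ → A) : Fin m → A := fun i => x (a + (i : ℕ))

lemma wd_image_shift {X : Set (ℤ → A)} (hsh : shift '' X = X) (a : ℤ) (m : ℕ) :
    wd a m '' X = wd 0 m '' X := by
  ext w
  constructor
  · rintro ⟨x, hx, rfl⟩
    refine ⟨zshift a x, zshift_mem hsh a hx, ?_⟩
    funext i
    simp only [wd, zshift]
    congr 1
    ring
  · rintro ⟨x, hx, rfl⟩
    refine ⟨zshift (-a) x, zshift_mem hsh (-a) hx, ?_⟩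
    funext i
    simp only [wd, zshift]
    congr 1
    ring

lemma ncard_wd_mono [Fintype A] {X : Set (ℤ → A)} (m k : ℕ) :
    (wd 0 m '' X).ncard ≤ (wd 0 (m + k) '' X).ncard := by
  classical
  have hfun : ∀ x : ℤ → A,
      (fun i : Fin m => wd 0 (m+k) x (Fin.castLE (Nat.le_add_right m k) i)) = wd 0 m x := by
    intro x; funext i; simp [wd]
  have himg : (fun w : Fin (m+k) → A => fun i : Fin m => w (Fin.castLE (Nat.le_add_right m k) i))
      '' (wd 0 (m+k) '' X) = wd 0 m '' X := by
    rw [Set.image_image]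
    exact Set.image_congr (fun x _ => hfun x)
  rw [← himg]
  exact Set.ncard_image_le (Set.toFinite _)

end Words

lemma finite_of_ray_codes {A : Type*} [Fintype A] [TopologicalSpace A] [DiscreteTopology A]
    (X : Set (ℤ → A)) (hcl : IsClosed X) (hsh : shift '' X = X)
    (ψ : (ℤ → A) → (ℤ → A)) (hm : Set.MapsTo ψ X X) (hs : Set.SurjOn ψ X X)
    (hc : ContinuousOn ψ X)
    (R : ℤ) (hR : 0 ≤ R) (hrad : ∀ j : ℤ, Codes X ψ (Set.Icc (j - R) (j + R)) {j})
    (W : ℤ) (hW : W + R < 0) (hcode : Codes X ψ (Set.Ici 0) (Set.Ici W)) :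
    X.Finite := by
  classical
  rcases X.eq_empty_or_nonempty with hXe | ⟨x₀, hx₀⟩
  · simp [hXe]
  haveI : Nonempty A := ⟨x₀ 0⟩
  haveI : Inhabited A := Classical.inhabited_of_nonempty this
  set g : ℕ := (-W - R).toNat with hg
  have hg1 : 1 ≤ g := by omega
  have hgz : (g : ℤ) = -W - R := by omega
  -- finite coding windows for each coordinate `j ≥ W`
  have hFex : ∀ j : ℤ, ∃ F : Finset ℤ, ↑F ⊆ Set.Ici (0:ℤ) ∧ (W ≤ j → Codes X ψ ↑F {j}) := by
    intro j
    by_cases hj : W ≤ j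
    · have hcj : Codes X ψ (Set.Ici 0) {j} := by
        intro x hx y hy hag j' hj'
        simp only [Set.mem_singleton_iff] at hj'
        subst hj'
        exact hcode x hx y hy hag _ (by simpa using hj)
      obtain ⟨F, h1, h2⟩ := exists_finset_codes hcl hc (Set.Ici 0) j hcj
      exact ⟨F, h1, fun _ => h2⟩
    · exact ⟨∅, by simp, fun h => absurd h hj⟩
  choose F hFsub hFcode using hFex
  set Msup : ℕ := (Finset.Icc W (R-1)).sup (fun j => (F j).sup fun i => i.toNat) with hMsup
  set M₀ : ℤ := max (2*R) ((Msup : ℤ)) with hM₀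
  have h2RM : 2*R ≤ M₀ := le_max_left _ _
  have hMsupM : (Msup : ℤ) ≤ M₀ := le_max_right _ _
  have hM₀0 : 0 ≤ M₀ := by omega
  -- coding window: `x = y` on `[0, M]` forces `ψx = ψy` on `[W, M - R]`.
  have hwin : ∀ M : ℤ, M₀ ≤ M → ∀ x ∈ X, ∀ y ∈ X, (∀ i ∈ Set.Icc (0:ℤ) M, x i = y i) →
      ∀ j ∈ Set.Icc W (M - R), ψ x j = ψ y j := by
    intro M hM x hx y hy hag j hj
    simp only [Set.mem_Icc] at hj
    by_cases hjR : j < R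
    · refine hFcode j hj.1 x hx y hy ?_ j rfl
      intro i hi
      have hi0 : (0:ℤ) ≤ i := hFsub j hi
      have hjmem : j ∈ Finset.Icc W (R-1) := by
        simp only [Finset.mem_Icc]; omega
      have hsup : i.toNat ≤ Msup := by
        rw [hMsup]
        exact le_trans (Finset.le_sup (f := fun i : ℤ => i.toNat) hi)
          (Finset.le_sup (f := fun j => (F j).sup fun i => i.toNat) hjmem)
      refine hag i ?_
      simp only [Set.mem_Icc]
      omega
    · refine hrad j x hx y hy ?_ j rfl
      intro i hi
      simp only [Set.mem_Icc] at hi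
      refine hag i ?_
      simp only [Set.mem_Icc]
      omega
  -- the cardinality step
  have hstep : ∀ m' : ℕ, (M₀ + 1).toNat ≤ m' →
      (wd 0 (m' + g) '' X).ncard ≤ (wd 0 m' '' X).ncard := by
    intro m' hm'
    set M : ℤ := (m' : ℤ) - 1 with hM
    have hMM : M₀ ≤ M := by omega
    have hLZ : W + ((m' + g : ℕ) : ℤ) - 1 = M - R := by push_cast; omega
    set Φ : (Fin m' → A) → (Fin (m' + g) → A) := fun w =>
      if h : ∃ x, x ∈ X ∧ wd 0 m' x = w then wd W (m' + g) (ψ h.choose) else default with hΦ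
    have hsub : wd W (m' + g) '' X ⊆ Φ '' (wd 0 m' '' X) := by
      rintro _ ⟨z, hz, rfl⟩
      obtain ⟨x, hx, hxz⟩ := hs hz
      refine ⟨wd 0 m' x, ⟨x, hx, rfl⟩, ?_⟩
      have hex : ∃ x', x' ∈ X ∧ wd 0 m' x' = wd 0 m' x := ⟨x, hx, rfl⟩
      rw [hΦ]
      simp only [dif_pos hex]
      obtain ⟨hx'X, hx'w⟩ := hex.choose_spec
      have hagree : ∀ i ∈ Set.Icc (0:ℤ) M, hex.choose i = x i := by
        intro i hi
        simp only [Set.mem_Icc] at hi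
        have hlt : i.toNat < m' := by omega
        have := congrFun hx'w ⟨i.toNat, hlt⟩
        simpa [wd, Int.toNat_of_nonneg hi.1] using this
      have hW' := hwin M hMM hex.choose hx'X x hx hagree
      rw [← hxz]
      funext i
      show ψ hex.choose (W + ((i:ℕ):ℤ)) = ψ x (W + ((i:ℕ):ℤ))
      refine hW' _ ?_
      have hiL : (i:ℕ) < m' + g := i.2
      simp only [Set.mem_Icc]
      omega
    calc (wd 0 (m'+g) '' X).ncard = (wd W (m'+g) '' X).ncard :=
          (wd_image_shift hsh W (m'+g)).symm ▸ rfl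
      _ ≤ (Φ '' (wd 0 m' '' X)).ncard := Set.ncard_le_ncard hsub (Set.toFinite _)
      _ ≤ (wd 0 m' '' X).ncard := Set.ncard_image_le (Set.toFinite _)
  set m₀ : ℕ := (M₀ + 1).toNat with hm₀
  have hCmono : ∀ a b : ℕ, a ≤ b → (wd 0 a '' X).ncard ≤ (wd 0 b '' X).ncard := by
    intro a b hab
    have := ncard_wd_mono (X := X) a (b - a)
    rwa [Nat.add_sub_cancel' hab] at this
  have hsucc : ∀ m', m₀ ≤ m' → (wd 0 (m'+1) '' X).ncard = (wd 0 m' '' X).ncard := by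
    intro m' h
    have h1 : (wd 0 (m'+1) '' X).ncard ≤ (wd 0 (m'+g) '' X).ncard := hCmono _ _ (by omega)
    have h2 := hstep m' h
    have h3 := hCmono m' (m'+1) (by omega)
    omega
  have hconst : ∀ k, (wd 0 (m₀ + k) '' X).ncard = (wd 0 m₀ '' X).ncard := by
    intro k
    induction k with
    | zero => rfl
    | succ k ih =>
        rw [show m₀ + (k+1) = (m₀ + k) + 1 by ring, hsucc _ (by omega), ih]
  -- unique two-sided extension
  have hext : ∀ k : ℕ, ∀ x ∈ X, ∀ y ∈ X, wd 0 m₀ x = wd 0 m₀ y →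
      wd (-(k:ℤ)) (m₀ + 2*k) x = wd (-(k:ℤ)) (m₀ + 2*k) y := by
    intro k
    induction k with
    | zero => intro x _ y _ h; simpa using h
    | succ k ih =>
        intro x hx y hy hxy
        have hIH := ih x hx y hy hxy
        set ρ : (Fin (m₀ + 2*(k+1)) → A) → (Fin (m₀ + 2*k) → A) :=
          fun w i => w ⟨(i:ℕ) + 1, by omega⟩ with hρ
        have hρwd : ∀ z : ℤ → A,
            ρ (wd (-((k:ℤ)+1)) (m₀ + 2*(k+1)) z) = wd (-(k:ℤ)) (m₀+2*k) z := by
          intro z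
          funext i
          simp only [hρ, wd]
          congr 1
          push_cast
          ring
        have hf : ∀ (a : Fin (m₀ + 2*(k+1)) → A)
            (_ : a ∈ wd (-((k:ℤ)+1)) (m₀ + 2*(k+1)) '' X),
            ρ a ∈ wd (-(k:ℤ)) (m₀+2*k) '' X := by
          rintro _ ⟨z, hz, rfl⟩
          rw [hρwd]
          exact ⟨z, hz, rfl⟩
        have hsurj : ∀ b ∈ wd (-(k:ℤ)) (m₀+2*k) '' X,
            ∃ a ha, (fun (w : Fin (m₀ + 2*(k+1)) → A)
              (_ : w ∈ wd (-((k:ℤ)+1)) (m₀ + 2*(k+1)) '' X) => ρ w) a ha = b := by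
          rintro _ ⟨z, hz, rfl⟩
          exact ⟨wd (-((k:ℤ)+1)) (m₀ + 2*(k+1)) z, ⟨z, hz, rfl⟩, hρwd z⟩
        have hcard : (wd (-((k:ℤ)+1)) (m₀ + 2*(k+1)) '' X).ncard ≤
            (wd (-(k:ℤ)) (m₀+2*k) '' X).ncard := by
          rw [wd_image_shift hsh (-((k:ℤ)+1)), wd_image_shift hsh (-(k:ℤ)), hconst, hconst]
        have h1 : wd (-((k:ℤ)+1)) (m₀ + 2*(k+1)) x ∈ wd (-((k:ℤ)+1)) (m₀ + 2*(k+1)) '' X :=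
          ⟨x, hx, rfl⟩
        have h2 : wd (-((k:ℤ)+1)) (m₀ + 2*(k+1)) y ∈ wd (-((k:ℤ)+1)) (m₀ + 2*(k+1)) '' X :=
          ⟨y, hy, rfl⟩
        have heq : ρ (wd (-((k:ℤ)+1)) (m₀ + 2*(k+1)) x)
            = ρ (wd (-((k:ℤ)+1)) (m₀ + 2*(k+1)) y) := by
          rw [hρwd, hρwd]; exact hIH
        have hres := Set.inj_on_of_surj_on_of_ncard_le
          (fun w _ => ρ w) hf hsurj hcard h1 h2 heq (Set.toFinite _)
        have hcast : -((k:ℤ)+1) = -((k+1 : ℕ) : ℤ) := by push_cast; ring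
        rw [← hcast]
        exact hres
  have hinjX : Set.InjOn (wd 0 m₀) X := by
    intro x hx y hy hxy
    funext j
    set k : ℕ := j.natAbs + 1 with hk
    have h := hext k x hx y hy hxy
    have hjk : (j + k).toNat < m₀ + 2*k := by omega
    have h2 := congrFun h ⟨(j + k).toNat, hjk⟩
    simpa [wd, Int.toNat_of_nonneg (by omega : (0:ℤ) ≤ j + k),
      show -(k:ℤ) + (j + k) = j by ring] using h2
  exact Set.Finite.of_finite_image (Set.toFinite _) hinjX


section Mirror
variable {A : Type*}

/-- Reflection of a bi-infinite sequence. -/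
def mirror (x : ℤ → A) : ℤ → A := fun n => x (-n)

lemma mirror_mirror (x : ℤ → A) : mirror (mirror x) = x := by
  funext n; simp [mirror]

lemma continuous_mirror [TopologicalSpace A] : Continuous (mirror (A := A)) :=
  continuous_pi fun n => continuous_apply (-n)

lemma shift_mirror (x : ℤ → A) : shift (mirror x) = mirror (zshift (-1) x) := by
  funext n
  simp only [shift, mirror, zshift]
  congr 1
  ring

lemma mirror_image_shift {X : Set (ℤ → A)} (hsh : shift '' X = X) :
    shift '' (mirror '' X) = mirror '' X := by
  ext w
  constructor
  · rintro ⟨_, ⟨x, hx, rfl⟩, rfl⟩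
    rw [shift_mirror]
    exact ⟨zshift (-1) x, zshift_mem hsh _ hx, rfl⟩
  · rintro ⟨x, hx, rfl⟩
    refine ⟨mirror (zshift 1 x), ⟨zshift 1 x, zshift_mem hsh _ hx, rfl⟩, ?_⟩
    rw [shift_mirror, zshift_zshift, zshift_congr (by ring : (-1:ℤ) + 1 = 0) x, zshift_zero]

lemma mirror_image_closed [TopologicalSpace A] {X : Set (ℤ → A)} (hcl : IsClosed X) :
    IsClosed (mirror '' X) := by
  have : mirror '' X = mirror ⁻¹' X := by
    ext w
    constructor
    · rintro ⟨x, hx, rfl⟩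
      simpa [Set.mem_preimage, mirror_mirror] using hx
    · intro hw
      exact ⟨mirror w, hw, mirror_mirror w⟩
  rw [this]
  exact hcl.preimage continuous_mirror

end Mirror


/-- The limits `α⁺(φ) = lim W⁺(n,φ)/n` and `α⁻(φ) = lim W⁻(n,φ)/n` exist and are finite;
moreover if `D` is at least the range of the block code of `φ` then `|W±(n)| ≤ D·n`. -/
theorem alpha_exists {A : Type*} [Fintype A] [TopologicalSpace A]
    [DiscreteTopology A] (X : Set (ℤ → A)) (hX : IsSubshift X) (hinf : X.Infinite)
    (φ : (ℤ → A) → (ℤ → A)) (hφ : IsEndo X φ)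
    (Wp Wm : ℕ → ℤ)
    (hWp : ∀ n, IsLeast (WplusSet X φ n) (Wp n))
    (hWm : ∀ n, IsGreatest (WminusSet X φ n) (Wm n))
    (D : ℕ) (hD : Codes X φ (Set.Icc (-(D : ℤ)) (D : ℤ)) {0}) :
    (∀ n : ℕ, |Wp n| ≤ (D : ℤ) * n ∧ |Wm n| ≤ (D : ℤ) * n) ∧
    (∃ αp : ℝ, Tendsto (fun n : ℕ => (Wp n : ℝ) / n) atTop (𝓝 αp)) ∧
    (∃ αm : ℝ, Tendsto (fun n : ℕ => (Wm n : ℝ) / n) atTop (𝓝 αm)) := by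

  obtain ⟨hcl, hsh⟩ := hX
  obtain ⟨hmaps, hsurj, hcont, hcomm⟩ := hφ
  have hD0 : (0:ℤ) ≤ (D:ℤ) := Int.natCast_nonneg D
  have hradn : ∀ n : ℕ, ∀ j : ℤ,
      Codes X (φ^[n]) (Set.Icc (j - (D:ℤ)*n) (j + (D:ℤ)*n)) {j} :=
    fun n => codes_iterate_radius hsh hmaps hcomm hD0 hD n
  -- upper bound for Wp
  have hWpU : ∀ n : ℕ, Wp n ≤ (D:ℤ) * n := by
    intro n
    refine (hWp n).2 ?_
    intro x hx y hy hag j hj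
    simp only [Set.mem_Ici] at hj
    refine hradn n j x hx y hy ?_ j rfl
    intro i hi
    simp only [Set.mem_Icc] at hi
    exact hag i (by simp only [Set.mem_Ici]; omega)
  -- lower bound for Wm
  have hWmL : ∀ n : ℕ, -((D:ℤ) * n) ≤ Wm n := by
    intro n
    refine (hWm n).2 ?_
    intro x hx y hy hag j hj
    simp only [Set.mem_Iic] at hj
    refine hradn n j x hx y hy ?_ j rfl
    intro i hi
    simp only [Set.mem_Icc] at hi
    exact hag i (by simp only [Set.mem_Iic]; omega)
  -- hard lower bound for Wp
  have hWpL : ∀ n : ℕ, -((D:ℤ)*n) ≤ Wp n := by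
    intro n
    by_contra hlt
    push_neg at hlt
    refine hinf ?_
    exact finite_of_ray_codes X hcl hsh (φ^[n]) (hmaps.iterate n) (surjOn_iterate hsurj n)
      (contOn_iterate hmaps hcont n) ((D:ℤ)*n) (by positivity) (hradn n) (Wp n) (by omega)
      (hWp n).1
  -- hard upper bound for Wm, via the mirror subshift
  have hWmU : ∀ n : ℕ, Wm n ≤ (D:ℤ)*n := by
    intro n
    by_contra hlt
    push_neg at hlt
    set ψ : (ℤ → A) → (ℤ → A) := fun x => mirror (φ^[n] (mirror x)) with hψ
    have hmaps' : Set.MapsTo ψ (mirror '' X) (mirror '' X) := by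
      rintro _ ⟨x, hx, rfl⟩
      rw [hψ]
      exact ⟨φ^[n] x, (hmaps.iterate n) hx, by simp only [mirror_mirror]⟩
    have hsurj' : Set.SurjOn ψ (mirror '' X) (mirror '' X) := by
      rintro _ ⟨z, hz, rfl⟩
      obtain ⟨x, hx, hxz⟩ := surjOn_iterate hsurj n hz
      exact ⟨mirror x, ⟨x, hx, rfl⟩, by rw [hψ]; simp only [mirror_mirror, hxz]⟩
    have hcont' : ContinuousOn ψ (mirror '' X) := by
      rw [hψ]
      refine continuous_mirror.comp_continuousOn ?_
      refine ContinuousOn.comp (contOn_iterate hmaps hcont n)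
        continuous_mirror.continuousOn ?_
      rintro _ ⟨x, hx, rfl⟩
      rw [mirror_mirror]
      exact hx
    have hrad' : ∀ j : ℤ, Codes (mirror '' X) ψ
        (Set.Icc (j - (D:ℤ)*n) (j + (D:ℤ)*n)) {j} := by
      rintro j _ ⟨x, hx, rfl⟩ _ ⟨y, hy, rfl⟩ hag j' hj'
      simp only [Set.mem_singleton_iff] at hj'
      subst hj'
      have : ψ (mirror x) j' = φ^[n] x (-j') := by
        rw [hψ]; simp only [mirror_mirror]; rfl
      rw [this, hψ]
      simp only [mirror_mirror]
      show φ^[n] x (-j') = φ^[n] y (-j')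
      refine hradn n (-j') x hx y hy ?_ (-j') rfl
      intro i hi
      simp only [Set.mem_Icc] at hi
      have := hag (-i) (by simp only [Set.mem_Icc]; omega)
      simpa [mirror] using this
    have hcode' : Codes (mirror '' X) ψ (Set.Ici 0) (Set.Ici (-(Wm n))) := by
      rintro _ ⟨x, hx, rfl⟩ _ ⟨y, hy, rfl⟩ hag j hj
      simp only [Set.mem_Ici] at hj
      have hxy : ∀ i ∈ Set.Iic (0:ℤ), x i = y i := by
        intro i hi
        simp only [Set.mem_Iic] at hi
        have := hag (-i) (by simp only [Set.mem_Ici]; omega)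
        simpa [mirror] using this
      have := (hWm n).1 x hx y hy hxy (-j) (by simp only [Set.mem_Iic]; omega)
      rw [hψ]
      simp only [mirror_mirror]
      show φ^[n] x (-j) = φ^[n] y (-j)
      exact this
    have hfin : (mirror '' X).Finite :=
      finite_of_ray_codes (mirror '' X) (mirror_image_closed hcl) (mirror_image_shift hsh)
        ψ hmaps' hsurj' hcont' ((D:ℤ)*n) (by positivity) hrad' (-(Wm n)) (by omega) hcode'
    refine hinf ?_
    have := hfin.image mirror
    rwa [Set.image_image, Set.image_congr (fun x _ => mirror_mirror x), Set.image_id'] at this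
  -- subadditivity
  have hWpsub : ∀ m n : ℕ, Wp (m + n) ≤ Wp m + Wp n := by
    intro m n
    refine (hWp (m+n)).2 ?_
    intro x hx y hy hag j hj
    rw [Function.iterate_add_apply, Function.iterate_add_apply]
    have h1 : ∀ i ∈ Set.Ici (Wp n), φ^[n] x i = φ^[n] y i :=
      fun i hi => (hWp n).1 x hx y hy hag i hi
    have h2 := codes_ici_translate hsh (comm_iterate hmaps hcomm m) (hWp m).1 (Wp n)
    exact h2 _ ((hmaps.iterate n) hx) _ ((hmaps.iterate n) hy) h1 j hj
  have hWmsub : ∀ m n : ℕ, Wm m + Wm n ≤ Wm (m + n) := by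
    intro m n
    refine (hWm (m+n)).2 ?_
    intro x hx y hy hag j hj
    rw [Function.iterate_add_apply, Function.iterate_add_apply]
    have h1 : ∀ i ∈ Set.Iic (Wm n), φ^[n] x i = φ^[n] y i :=
      fun i hi => (hWm n).1 x hx y hy hag i hi
    have h2 := codes_iic_translate hsh (comm_iterate hmaps hcomm m) (hWm m).1 (Wm n)
    exact h2 _ ((hmaps.iterate n) hx) _ ((hmaps.iterate n) hy) h1 j hj
  refine ⟨fun n => ⟨abs_le.mpr ⟨by linarith [hWpL n], hWpU n⟩,
    abs_le.mpr ⟨by linarith [hWmL n], hWmU n⟩⟩, ?_, ?_⟩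
  · -- Fekete for Wp
    have hsa : Subadditive (fun n => (Wp n : ℝ)) := by
      intro m n
      show ((Wp (m+n) : ℝ)) ≤ (Wp m : ℝ) + (Wp n : ℝ)
      exact_mod_cast hWpsub m n
    have hbdd : BddBelow (Set.range fun n : ℕ => ((Wp n : ℝ)) / n) := by
      refine ⟨-(D:ℝ), ?_⟩
      rintro _ ⟨n, rfl⟩
      rcases Nat.eq_zero_or_pos n with rfl | hn
      · simp only [Nat.cast_zero, div_zero]
        exact neg_nonpos.mpr (by positivity)
      · have hn' : (0:ℝ) < n := by exact_mod_cast hn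
        rw [le_div_iff₀ hn']
        have h1 : -((D:ℝ)*n) ≤ (Wp n : ℝ) := by exact_mod_cast hWpL n
        linarith
    exact ⟨hsa.lim, hsa.tendsto_lim hbdd⟩
  · -- Fekete for -Wm
    have hsa : Subadditive (fun n => (-(Wm n) : ℝ)) := by
      intro m n
      show -((Wm (m+n) : ℝ)) ≤ -((Wm m : ℝ)) + -((Wm n : ℝ))
      have h2 : (Wm m : ℝ) + Wm n ≤ Wm (m+n) := by exact_mod_cast hWmsub m n
      linarith
    have hbdd : BddBelow (Set.range fun n : ℕ => ((-(Wm n) : ℝ)) / n) := by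
      refine ⟨-(D:ℝ), ?_⟩
      rintro _ ⟨n, rfl⟩
      rcases Nat.eq_zero_or_pos n with rfl | hn
      · simp only [Nat.cast_zero, div_zero]
        exact neg_nonpos.mpr (by positivity)
      · have hn' : (0:ℝ) < n := by exact_mod_cast hn
        rw [le_div_iff₀ hn']
        have h1 : (Wm n : ℝ) ≤ (D:ℝ)*n := by exact_mod_cast hWmU n
        linarith
    refine ⟨-hsa.lim, ?_⟩
    have h := (hsa.tendsto_lim hbdd).neg
    have heq : (fun n : ℕ => (Wm n : ℝ)/n) = fun n : ℕ => -(((-(Wm n) : ℝ))/n) := by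
      funext n
      push_cast
      ring
    rw [heq]
    exact h
end

section
/- For an endomorphism φ of an infinite subshift and any m ∈ ℕ: α^+(φ^m) = m·α^+(φ) and α^-(φ^m) = m·α^-(φ). -/
open Filter Topology

lemma tendsto_mul_sub {W : ℕ → ℤ} {a : ℝ} {m : ℕ} (hm : 0 < m)
    (h : Tendsto (fun n : ℕ => (W n : ℝ) / n) atTop (𝓝 a)) :
    Tendsto (fun n : ℕ => (W (m * n) : ℝ) / n) atTop (𝓝 ((m : ℝ) * a)) := by
  have h1 : Tendsto (fun n : ℕ => (m : ℝ) * ((W (m * n) : ℝ) / ((m * n : ℕ) : ℝ))) atTop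
      (𝓝 ((m : ℝ) * a)) := by
    exact (h.comp (tendsto_atTop_atTop_of_monotone
      (fun i j hij => Nat.mul_le_mul_left m hij)
      (fun b => ⟨b, Nat.le_mul_of_pos_left b hm⟩))).const_mul _
  refine h1.congr' ?_
  filter_upwards [eventually_gt_atTop 0] with n hn
  have hn' : (n : ℝ) ≠ 0 := Nat.cast_ne_zero.2 hn.ne'
  have hm' : (m : ℝ) ≠ 0 := Nat.cast_ne_zero.2 hm.ne'
  push_cast
  field_simp

/-- For any `m ∈ ℕ`: `α⁺(φᵐ) = m·α⁺(φ)` and `α⁻(φᵐ) = m·α⁻(φ)`. -/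
theorem alpha_pow {A : Type*} [Fintype A] [TopologicalSpace A]
    [DiscreteTopology A] (X : Set (ℤ → A)) (hX : IsSubshift X) (hinf : X.Infinite)
    (φ : (ℤ → A) → (ℤ → A)) (hφ : IsEndo X φ) (m : ℕ)
    (Wp Wm Wp' Wm' : ℕ → ℤ)
    (hWp : ∀ n, IsLeast (WplusSet X φ n) (Wp n))
    (hWm : ∀ n, IsGreatest (WminusSet X φ n) (Wm n))
    (hWp' : ∀ n, IsLeast (WplusSet X (φ^[m]) n) (Wp' n))
    (hWm' : ∀ n, IsGreatest (WminusSet X (φ^[m]) n) (Wm' n))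
    (αp αm αp' αm' : ℝ)
    (hαp : Tendsto (fun n : ℕ => (Wp n : ℝ) / n) atTop (𝓝 αp))
    (hαm : Tendsto (fun n : ℕ => (Wm n : ℝ) / n) atTop (𝓝 αm))
    (hαp' : Tendsto (fun n : ℕ => (Wp' n : ℝ) / n) atTop (𝓝 αp'))
    (hαm' : Tendsto (fun n : ℕ => (Wm' n : ℝ) / n) atTop (𝓝 αm')) :
    αp' = (m : ℝ) * αp ∧ αm' = (m : ℝ) * αm  := by
  have key : ∀ n : ℕ, (φ^[m])^[n] = φ^[m * n] := fun n => (Function.iterate_mul φ m n).symm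
  have hp : ∀ n, Wp' n = Wp (m * n) := fun n => by
    have h1 := hWp' n
    rw [show WplusSet X (φ^[m]) n = WplusSet X φ (m * n) by
      unfold WplusSet; rw [key]] at h1
    exact h1.unique (hWp (m * n))
  have hq : ∀ n, Wm' n = Wm (m * n) := fun n => by
    have h1 := hWm' n
    rw [show WminusSet X (φ^[m]) n = WminusSet X φ (m * n) by
      unfold WminusSet; rw [key]] at h1
    exact h1.unique (hWm (m * n))
  rcases Nat.eq_zero_or_pos m with rfl | hm
  · have hz : ∀ n, Wp' n = Wp 0 := fun n => by rw [hp n, Nat.zero_mul]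
    have hz' : ∀ n, Wm' n = Wm 0 := fun n => by rw [hq n, Nat.zero_mul]
    have t1 : Tendsto (fun n : ℕ => (Wp' n : ℝ) / n) atTop (𝓝 0) := by
      simp only [hz]
      simpa using tendsto_const_nhds.div_atTop (tendsto_natCast_atTop_atTop (R := ℝ))
    have t2 : Tendsto (fun n : ℕ => (Wm' n : ℝ) / n) atTop (𝓝 0) := by
      simp only [hz']
      simpa using tendsto_const_nhds.div_atTop (tendsto_natCast_atTop_atTop (R := ℝ))
    constructor <;> simp [tendsto_nhds_unique hαp' t1, tendsto_nhds_unique hαm' t2]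
  · constructor
    · refine tendsto_nhds_unique hαp' ?_
      have := tendsto_mul_sub hm hαp
      simpa only [hp] using this
    · refine tendsto_nhds_unique hαm' ?_
      have := tendsto_mul_sub hm hαm
      simpa only [hq] using this
end

section
/- If X is an infinite subshift and φ an endomorphism of X, then α^-(φ) ≤ α^+(φ); equivalently, W^+(n, φ) ≥ W^-(n, φ) for all n > 0. -/
open Filter Topology

namespace AlphaAux

variable {A : Type*}

lemma zshift_mem [TopologicalSpace A] {X : Set (ℤ → A)} (hX : IsSubshift X) :
    ∀ (k : ℤ), ∀ x ∈ X, zshift k x ∈ X := by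
  have hfwd : ∀ x ∈ X, shift x ∈ X := fun x hx => hX.2 ▸ Set.mem_image_of_mem _ hx
  intro k
  induction k using Int.induction_on with
  | zero => intro x hx; convert hx using 1; funext n; simp [zshift]
  | succ k ih =>
      intro x hx
      have h : zshift ((k : ℤ) + 1) x = zshift k (shift x) := by
        funext n; simp only [zshift, shift]; ring_nf
      rw [h]; exact ih _ (hfwd _ hx)
  | pred k ih =>
      intro x hx
      obtain ⟨y, hy, hxy⟩ : ∃ y ∈ X, shift y = x := by
        conv at hx => rw [← hX.2]
        exact hx
      have h : zshift (-(k : ℤ) - 1) x = zshift (-k) y := by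
        funext n; rw [← hxy]; simp only [zshift, shift]; ring_nf
      rw [h]; exact ih _ hy

lemma endo_zshift [TopologicalSpace A] {X : Set (ℤ → A)} {φ : (ℤ → A) → (ℤ → A)}
    (hX : IsSubshift X) (hφ : IsEndo X φ) :
    ∀ (k : ℤ), ∀ x ∈ X, φ (zshift k x) = zshift k (φ x) := by
  have hfwd : ∀ x ∈ X, shift x ∈ X := fun x hx => hX.2 ▸ Set.mem_image_of_mem _ hx
  intro k
  induction k using Int.induction_on with
  | zero =>
      intro x hx
      have h : zshift (0 : ℤ) x = x := by funext n; simp [zshift]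
      have h' : zshift (0 : ℤ) (φ x) = φ x := by funext n; simp [zshift]
      rw [h, h']
  | succ k ih =>
      intro x hx
      have h : zshift ((k : ℤ) + 1) x = zshift k (shift x) := by
        funext n; simp only [zshift, shift]; ring_nf
      have h' : zshift ((k : ℤ) + 1) (φ x) = zshift k (shift (φ x)) := by
        funext n; simp only [zshift, shift]; ring_nf
      rw [h, h', ih _ (hfwd _ hx), hφ.comm x hx]
  | pred k ih =>
      intro x hx
      obtain ⟨y, hy, hxy⟩ : ∃ y ∈ X, shift y = x := by
        conv at hx => rw [← hX.2]
        exact hx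
      have h : zshift (-(k : ℤ) - 1) x = zshift (-k) y := by
        funext n; rw [← hxy]; simp only [zshift, shift]; ring_nf
      have h' : zshift (-(k : ℤ) - 1) (φ x) = zshift (-k) (φ y) := by
        funext n
        rw [← hxy, hφ.comm y hy]
        simp only [zshift, shift]; ring_nf
      rw [h, h', ih _ hy]

lemma codes_finite [Fintype A] [TopologicalSpace A] [DiscreteTopology A]
    {X : Set (ℤ → A)} (hXcl : IsClosed X) {ψ : (ℤ → A) → (ℤ → A)}
    (hcont : ContinuousOn ψ X) {S : Set ℤ} {j : ℤ}
    (h : ∀ x ∈ X, ∀ y ∈ X, (∀ i ∈ S, x i = y i) → ψ x j = ψ y j) :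
    ∃ F : Finset ℤ, ∀ x ∈ X, ∀ y ∈ X, (∀ i ∈ F, i ∈ S → x i = y i) → ψ x j = ψ y j := by
  by_contra hc
  push_neg at hc
  choose x hx y hy hagree hne using hc
  obtain ⟨𝒰, h𝒰⟩ := Ultrafilter.exists_le (atTop : Filter (Finset ℤ))
  have hXc : IsCompact X := hXcl.isCompact
  obtain ⟨x₀, hx₀, hxlim⟩ := hXc.ultrafilter_le_nhds (𝒰.map x)
    (by rw [Ultrafilter.coe_map, Filter.le_principal_iff, Filter.mem_map]
        exact Filter.Eventually.of_forall hx)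
  obtain ⟨y₀, hy₀, hylim⟩ := hXc.ultrafilter_le_nhds (𝒰.map y)
    (by rw [Ultrafilter.coe_map, Filter.le_principal_iff, Filter.mem_map]
        exact Filter.Eventually.of_forall hy)
  have hxlim' : Filter.Tendsto x 𝒰 (𝓝 x₀) := hxlim
  have hylim' : Filter.Tendsto y 𝒰 (𝓝 y₀) := hylim
  have hxev : ∀ i : ℤ, ∀ᶠ F in (𝒰 : Filter (Finset ℤ)), x F i = x₀ i := by
    intro i
    have : Filter.Tendsto (fun F => x F i) 𝒰 (𝓝 (x₀ i)) :=
      ((continuous_apply i).tendsto x₀).comp hxlim'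
    rw [nhds_discrete, tendsto_pure] at this
    exact this
  have hyev : ∀ i : ℤ, ∀ᶠ F in (𝒰 : Filter (Finset ℤ)), y F i = y₀ i := by
    intro i
    have : Filter.Tendsto (fun F => y F i) 𝒰 (𝓝 (y₀ i)) :=
      ((continuous_apply i).tendsto y₀).comp hylim'
    rw [nhds_discrete, tendsto_pure] at this
    exact this
  have hagree₀ : ∀ i ∈ S, x₀ i = y₀ i := by
    intro s hs
    have hmem : ∀ᶠ F in (𝒰 : Filter (Finset ℤ)), s ∈ F := by
      apply h𝒰
      filter_upwards [Filter.mem_atTop ({s} : Finset ℤ)] with F hF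
      exact Finset.singleton_subset_iff.mp hF
    obtain ⟨F, h1, h2, h3⟩ := ((hxev s).and ((hyev s).and hmem)).exists
    rw [← h1, ← h2, hagree F s h3 hs]
  have heq : ψ x₀ j = ψ y₀ j := h x₀ hx₀ y₀ hy₀ hagree₀
  have hxlimW : Filter.Tendsto x 𝒰 (𝓝[X] x₀) :=
    tendsto_nhdsWithin_iff.mpr ⟨hxlim', Filter.Eventually.of_forall hx⟩
  have hylimW : Filter.Tendsto y 𝒰 (𝓝[X] y₀) :=
    tendsto_nhdsWithin_iff.mpr ⟨hylim', Filter.Eventually.of_forall hy⟩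
  have hψx : Filter.Tendsto (fun F => ψ (x F) j) 𝒰 (𝓝 (ψ x₀ j)) :=
    ((continuous_apply j).tendsto (ψ x₀)).comp ((hcont x₀ hx₀).tendsto.comp hxlimW)
  have hψy : Filter.Tendsto (fun F => ψ (y F) j) 𝒰 (𝓝 (ψ y₀ j)) :=
    ((continuous_apply j).tendsto (ψ y₀)).comp ((hcont y₀ hy₀).tendsto.comp hylimW)
  rw [nhds_discrete, tendsto_pure] at hψx hψy
  obtain ⟨F, h1, h2⟩ := (hψx.and hψy).exists
  exact hne F (by rw [h1, h2, heq])

/-- words -/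
def wd (t : ℤ) (k : ℕ) (x : ℤ → A) : Fin k → A := fun i => x (t + (i.val : ℤ))

lemma wd_eq_iff {t : ℤ} {k : ℕ} {x y : ℤ → A} :
    wd t k x = wd t k y ↔ ∀ i : ℤ, t ≤ i → i < t + k → x i = y i := by
  constructor
  · intro h i h1 h2
    have hk : (i - t).toNat < k := by omega
    have := congrFun h ⟨(i - t).toNat, hk⟩
    simp only [wd] at this
    rwa [show t + (((i - t).toNat : ℕ) : ℤ) = i by omega] at this
  · intro h
    funext i
    exact h (t + (i.val : ℤ)) (by omega) (by have := i.isLt; omega)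

def Lset (X : Set (ℤ → A)) (t : ℤ) (k : ℕ) : Set (Fin k → A) := wd t k '' X

lemma Lset_subset {X : Set (ℤ → A)} (hmem : ∀ (k : ℤ), ∀ x ∈ X, zshift k x ∈ X)
    (t t' : ℤ) (k : ℕ) : Lset X t k ⊆ Lset X t' k := by
  rintro w ⟨x, hx, rfl⟩
  refine ⟨zshift (t - t') x, hmem _ _ hx, ?_⟩
  funext i
  simp only [wd, zshift]
  congr 1
  ring

lemma Lset_shift {X : Set (ℤ → A)} (hmem : ∀ (k : ℤ), ∀ x ∈ X, zshift k x ∈ X)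
    (t t' : ℤ) (k : ℕ) : Lset X t k = Lset X t' k :=
  le_antisymm (Lset_subset hmem t t' k) (Lset_subset hmem t' t k)

lemma complexity_strict [Fintype A] {X : Set (ℤ → A)}
    (hmem : ∀ (k : ℤ), ∀ x ∈ X, zshift k x ∈ X)
    (hinf : X.Infinite) (k : ℕ) (hk : 1 ≤ k) :
    (Lset X 0 k).ncard < (Lset X 0 (k + 1)).ncard := by
  by_contra hle
  push_neg at hle
  set ρ : (Fin (k + 1) → A) → (Fin k → A) := fun w i => w i.castSucc with hρdef
  set ρ' : (Fin (k + 1) → A) → (Fin k → A) := fun w i => w i.succ with hρ'def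
  have hρx : ∀ x : ℤ → A, ρ (wd 0 (k + 1) x) = wd 0 k x := by
    intro x; funext i; simp [wd, hρdef]
  have hρ'x : ∀ x : ℤ → A, ρ' (wd 0 (k + 1) x) = wd 1 k x := by
    intro x; funext i; simp only [wd, hρ'def, Fin.val_succ]
    congr 1; push_cast; ring
  have hmapsρ : ∀ w ∈ Lset X 0 (k + 1), ρ w ∈ Lset X 0 k := by
    rintro w ⟨x, hx, rfl⟩; exact ⟨x, hx, (hρx x).symm⟩
  have hmapsρ' : ∀ w ∈ Lset X 0 (k + 1), ρ' w ∈ Lset X 0 k := by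
    rintro w ⟨x, hx, rfl⟩
    rw [Lset_shift hmem 0 1]
    exact ⟨x, hx, (hρ'x x).symm⟩
  have hsurρ : ∀ w ∈ Lset X 0 k, ∃ u ∈ Lset X 0 (k + 1), ρ u = w := by
    rintro w ⟨x, hx, rfl⟩; exact ⟨wd 0 (k + 1) x, ⟨x, hx, rfl⟩, hρx x⟩
  have hsurρ' : ∀ w ∈ Lset X 0 k, ∃ u ∈ Lset X 0 (k + 1), ρ' u = w := by
    intro w hw
    rw [Lset_shift hmem 0 1] at hw
    obtain ⟨x, hx, rfl⟩ := hw
    exact ⟨wd 0 (k + 1) x, ⟨x, hx, rfl⟩, hρ'x x⟩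
  have hinj : Set.InjOn ρ (Lset X 0 (k + 1)) := by
    intro a ha b hb hab
    exact Set.inj_on_of_surj_on_of_ncard_le (fun a _ => ρ a) hmapsρ
      (fun b hb => by obtain ⟨u, hu, h⟩ := hsurρ b hb; exact ⟨u, hu, h⟩) hle ha hb hab
  have hinj' : Set.InjOn ρ' (Lset X 0 (k + 1)) := by
    intro a ha b hb hab
    exact Set.inj_on_of_surj_on_of_ncard_le (fun a _ => ρ' a) hmapsρ'
      (fun b hb => by obtain ⟨u, hu, h⟩ := hsurρ' b hb; exact ⟨u, hu, h⟩) hle ha hb hab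
  -- unique right extension
  have hR : ∀ x ∈ X, ∀ y ∈ X, (∀ i : ℤ, 0 ≤ i → i < k → x i = y i) → x k = y k := by
    intro x hx y hy hag
    have h1 : ρ (wd 0 (k + 1) x) = ρ (wd 0 (k + 1) y) := by
      rw [hρx, hρx]
      exact wd_eq_iff.mpr (fun i a b => hag i (by omega) (by omega))
    have h2 := hinj ⟨x, hx, rfl⟩ ⟨y, hy, rfl⟩ h1
    have h3 := (wd_eq_iff.mp h2) k (by omega) (by omega)
    simpa using h3
  have hL : ∀ x ∈ X, ∀ y ∈ X, (∀ i : ℤ, 1 ≤ i → i ≤ k → x i = y i) → x 0 = y 0 := by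
    intro x hx y hy hag
    have h1 : ρ' (wd 0 (k + 1) x) = ρ' (wd 0 (k + 1) y) := by
      rw [hρ'x, hρ'x]
      exact wd_eq_iff.mpr (fun i a b => hag i (by omega) (by omega))
    have h2 := hinj' ⟨x, hx, rfl⟩ ⟨y, hy, rfl⟩ h1
    have h3 := (wd_eq_iff.mp h2) 0 (by omega) (by omega)
    simpa using h3
  have hRt : ∀ t : ℤ, ∀ x ∈ X, ∀ y ∈ X,
      (∀ i : ℤ, t ≤ i → i < t + k → x i = y i) → x (t + k) = y (t + k) := by
    intro t x hx y hy hag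
    have := hR (zshift t x) (hmem t x hx) (zshift t y) (hmem t y hy)
      (fun i h1 h2 => by simpa [zshift] using hag (i + t) (by omega) (by omega))
    simpa [zshift, add_comm] using this
  have hLt : ∀ t : ℤ, ∀ x ∈ X, ∀ y ∈ X,
      (∀ i : ℤ, t < i → i ≤ t + k → x i = y i) → x t = y t := by
    intro t x hx y hy hag
    have := hL (zshift t x) (hmem t x hx) (zshift t y) (hmem t y hy)
      (fun i h1 h2 => by simpa [zshift] using hag (i + t) (by omega) (by omega))
    simpa [zshift] using this
  have key : Set.InjOn (wd 0 k) X := by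
    intro x hx y hy hw
    have hag := wd_eq_iff.mp hw
    have main : ∀ n : ℕ, ∀ i : ℤ, -(n : ℤ) ≤ i → i < k + n → x i = y i := by
      intro n
      induction n with
      | zero => intro i h1 h2; exact hag i (by omega) (by omega)
      | succ n ih =>
          intro i h1 h2
          by_cases hc1 : i = (k : ℤ) + n
          · have := hRt n x hx y hy (fun i' a b => ih i' (by omega) (by omega))
            rw [hc1, show (k : ℤ) + n = (n : ℤ) + k by ring]
            exact this
          · by_cases hc2 : i = -(n : ℤ) - 1
            · have := hLt (-(n : ℤ) - 1) x hx y hy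
                (fun i' a b => ih i' (by omega) (by omega))
              rw [hc2]; exact this
            · exact ih i (by omega) (by omega)
    funext i
    exact main (i.natAbs + k) i (by omega) (by omega)
  exact hinf (Set.Finite.of_finite_image (Set.toFinite _) key)


lemma contOn_iterate [TopologicalSpace A] {X : Set (ℤ → A)} {φ : (ℤ → A) → (ℤ → A)}
    (hmaps : Set.MapsTo φ X X) (hcont : ContinuousOn φ X) :
    ∀ n : ℕ, ContinuousOn (φ^[n]) X := by
  intro n
  induction n with
  | zero => exact continuousOn_id
  | succ n ih =>
      rw [Function.iterate_succ]
      exact ih.comp hcont hmaps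

lemma iterate_zshift [TopologicalSpace A] {X : Set (ℤ → A)} {φ : (ℤ → A) → (ℤ → A)}
    (hmaps : Set.MapsTo φ X X)
    (hφz : ∀ (k : ℤ), ∀ x ∈ X, φ (zshift k x) = zshift k (φ x)) :
    ∀ (n : ℕ) (k : ℤ), ∀ x ∈ X, φ^[n] (zshift k x) = zshift k (φ^[n] x) := by
  intro n
  induction n with
  | zero => intro k x hx; rfl
  | succ n ih =>
      intro k x hx
      rw [Function.iterate_succ_apply, Function.iterate_succ_apply,
        hφz k x hx, ih k (φ x) (hmaps hx)]

end AlphaAux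


/-- If `X` is infinite then `W⁻(n,φ) ≤ W⁺(n,φ)` for all `n > 0`, and hence
`α⁻(φ) ≤ α⁺(φ)`. -/
theorem alpha_minus_le_alpha_plus {A : Type*} [Fintype A] [TopologicalSpace A]
    [DiscreteTopology A] (X : Set (ℤ → A)) (hX : IsSubshift X) (hinf : X.Infinite)
    (φ : (ℤ → A) → (ℤ → A)) (hφ : IsEndo X φ)
    (Wp Wm : ℕ → ℤ)
    (hWp : ∀ n, IsLeast (WplusSet X φ n) (Wp n))
    (hWm : ∀ n, IsGreatest (WminusSet X φ n) (Wm n))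
    (αp αm : ℝ)
    (hαp : Tendsto (fun n : ℕ => (Wp n : ℝ) / n) atTop (𝓝 αp))
    (hαm : Tendsto (fun n : ℕ => (Wm n : ℝ) / n) atTop (𝓝 αm)) :
    (∀ n : ℕ, 1 ≤ n → Wm n ≤ Wp n) ∧ αm ≤ αp := by
  classical
  have key : ∀ n : ℕ, 1 ≤ n → Wm n ≤ Wp n := by
    intro n _
    by_contra hlt
    push_neg at hlt
    set ψ := φ^[n] with hψdef
    have hmem : ∀ (k : ℤ), ∀ x ∈ X, zshift k x ∈ X := AlphaAux.zshift_mem hX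
    have hφz : ∀ (k : ℤ), ∀ x ∈ X, φ (zshift k x) = zshift k (φ x) :=
      AlphaAux.endo_zshift hX hφ
    have hψmaps : Set.MapsTo ψ X X := hφ.maps.iterate n
    have hψsurj : Set.SurjOn ψ X X := hφ.surj.iterate n
    have hψcont : ContinuousOn ψ X := AlphaAux.contOn_iterate hφ.maps hφ.cont n
    have hψz : ∀ (k : ℤ), ∀ x ∈ X, ψ (zshift k x) = zshift k (ψ x) :=
      AlphaAux.iterate_zshift hφ.maps hφz n
    have hcodP : Codes X ψ (Set.Ici 0) (Set.Ici (Wp n)) := (hWp n).1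
    have hcodM : Codes X ψ (Set.Iic 0) (Set.Iic (Wm n)) := (hWm n).1
    -- coordinate `Wm n` is coded by `[1,∞)`
    have cR : ∀ x ∈ X, ∀ y ∈ X, (∀ i ∈ Set.Ici (1 : ℤ), x i = y i) →
        ψ x (Wm n) = ψ y (Wm n) := by
      intro x hx y hy hag
      have h1 := hcodP (zshift 1 x) (hmem 1 x hx) (zshift 1 y) (hmem 1 y hy)
        (fun i hi => by
          simp only [zshift]
          exact hag (i + 1) (by simp at hi ⊢; omega)) (Wm n - 1)
        (by simp only [Set.mem_Ici] at *; omega)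
      rw [hψz 1 x hx, hψz 1 y hy] at h1
      simpa [zshift] using h1
    -- coordinate `Wm n` is coded by `(-∞,0]`
    have cL : ∀ x ∈ X, ∀ y ∈ X, (∀ i ∈ Set.Iic (0 : ℤ), x i = y i) →
        ψ x (Wm n) = ψ y (Wm n) := fun x hx y hy hag =>
      hcodM x hx y hy hag (Wm n) (by simp)
    obtain ⟨FR, hFR⟩ := AlphaAux.codes_finite hX.1 hψcont cR
    obtain ⟨FL, hFL⟩ := AlphaAux.codes_finite hX.1 hψcont cL
    obtain ⟨r', hr'⟩ : ∃ r' : ℕ, ∀ i ∈ FR, (1 : ℤ) ≤ i → i ≤ 1 + r' :=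
      ⟨FR.sup (fun i => i.toNat), fun i hi h1 => by
        have := Finset.le_sup (f := fun i : ℤ => i.toNat) hi
        omega⟩
    obtain ⟨l', hl'⟩ : ∃ l' : ℕ, ∀ i ∈ FL, i ≤ (0 : ℤ) → -(l' : ℤ) ≤ i :=
      ⟨FL.sup (fun i => (-i).toNat), fun i hi h1 => by
        have := Finset.le_sup (f := fun i : ℤ => (-i).toNat) hi
        omega⟩
    have hRwin : ∀ t : ℤ, ∀ x ∈ X, ∀ y ∈ X,
        (∀ i : ℤ, t + 1 ≤ i → i ≤ t + 1 + r' → x i = y i) →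
        ψ x (Wm n + t) = ψ y (Wm n + t) := by
      intro t x hx y hy hag
      have h1 := hFR (zshift t x) (hmem t x hx) (zshift t y) (hmem t y hy)
        (fun i hi hi1 => by
          simp only [Set.mem_Ici] at hi1
          have h2 := hr' i hi hi1
          simp only [zshift]
          exact hag (i + t) (by omega) (by omega))
      rw [hψz t x hx, hψz t y hy] at h1
      simpa [zshift] using h1
    have hLwin : ∀ t : ℤ, ∀ x ∈ X, ∀ y ∈ X,
        (∀ i : ℤ, t - l' ≤ i → i ≤ t → x i = y i) →
        ψ x (Wm n + t) = ψ y (Wm n + t) := by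
      intro t x hx y hy hag
      have h1 := hFL (zshift t x) (hmem t x hx) (zshift t y) (hmem t y hy)
        (fun i hi hi1 => by
          simp only [Set.mem_Iic] at hi1
          have h2 := hl' i hi hi1
          simp only [zshift]
          exact hag (i + t) (by omega) (by omega))
      rw [hψz t x hx, hψz t y hy] at h1
      simpa [zshift] using h1
    set m : ℕ := l' + r' + 1 with hm
    have hclaim : ∀ x ∈ X, ∀ y ∈ X, (∀ i : ℤ, 1 ≤ i → i ≤ m → x i = y i) →
        ∀ t : ℤ, 0 ≤ t → t ≤ m → ψ x (Wm n + t) = ψ y (Wm n + t) := by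
      intro x hx y hy hag t h0 hmt
      by_cases hc : t ≤ l'
      · exact hRwin t x hx y hy (fun i h1 h2 => hag i (by omega) (by omega))
      · exact hLwin t x hx y hy (fun i h1 h2 => hag i (by omega) (by omega))
    have hNA : Nonempty (Fin (m + 1) → A) := by
      obtain ⟨x, hx⟩ := hinf.nonempty
      exact ⟨fun _ => x 0⟩
    obtain ⟨G, hG⟩ : ∃ G : (Fin m → A) → (Fin (m + 1) → A),
        ∀ x ∈ X, G (AlphaAux.wd 1 m x) = AlphaAux.wd (Wm n) (m + 1) (ψ x) := by
      refine ⟨fun w =>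
        if h : w ∈ AlphaAux.Lset X 1 m then
          AlphaAux.wd (Wm n) (m + 1) (ψ h.choose) else Classical.arbitrary _, ?_⟩
      intro x hx
      have hwmem : AlphaAux.wd 1 m x ∈ AlphaAux.Lset X 1 m := ⟨x, hx, rfl⟩
      show (if h : AlphaAux.wd 1 m x ∈ AlphaAux.Lset X 1 m then
          AlphaAux.wd (Wm n) (m + 1) (ψ h.choose) else Classical.arbitrary _) = _
      rw [dif_pos hwmem]
      obtain ⟨hx₀, hw₀⟩ := hwmem.choose_spec
      funext i
      simp only [AlphaAux.wd]
      have hag : ∀ j : ℤ, 1 ≤ j → j ≤ m → hwmem.choose j = x j := by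
        intro j h1 h2
        exact (AlphaAux.wd_eq_iff.mp hw₀) j (by omega) (by omega)
      exact hclaim hwmem.choose hx₀ x hx hag (i.val : ℤ) (by omega)
        (by have := i.isLt; omega)
    have hsub : AlphaAux.Lset X (Wm n) (m + 1) ⊆ G '' (AlphaAux.Lset X 1 m) := by
      rintro w ⟨z, hz, rfl⟩
      obtain ⟨x, hx, hxz⟩ := hψsurj hz
      exact ⟨AlphaAux.wd 1 m x, ⟨x, hx, rfl⟩, by rw [hG x hx, hxz]⟩
    have hcard : (AlphaAux.Lset X 0 (m + 1)).ncard ≤ (AlphaAux.Lset X 0 m).ncard := by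
      calc (AlphaAux.Lset X 0 (m + 1)).ncard
          = (AlphaAux.Lset X (Wm n) (m + 1)).ncard := by
            rw [AlphaAux.Lset_shift hmem 0 (Wm n)]
        _ ≤ (G '' (AlphaAux.Lset X 1 m)).ncard :=
            Set.ncard_le_ncard hsub (Set.toFinite _)
        _ ≤ (AlphaAux.Lset X 1 m).ncard := Set.ncard_image_le (Set.toFinite _)
        _ = (AlphaAux.Lset X 0 m).ncard := by rw [AlphaAux.Lset_shift hmem 1 0]
    exact absurd hcard
      (not_le.mpr (AlphaAux.complexity_strict hmem hinf m (by omega)))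
  refine ⟨key, ?_⟩
  refine le_of_tendsto_of_tendsto hαm hαp ?_
  filter_upwards [eventually_ge_atTop 1] with n hn
  have h1 : (Wm n : ℝ) ≤ (Wp n : ℝ) := by exact_mod_cast key n hn
  have h2 : (0 : ℝ) < n := by exact_mod_cast hn
  gcongr
end

section
/- For any rational numbers r₁ ≤ r₂, there exist a full shift (X, σ) over some finite alphabet and an automorphism φ of (X, σ) with α^-(φ) = r₁ and α^+(φ) = r₂. -/
open Filter Topology

def psi (q : ℕ) (p : ℤ) (x : ℤ → (Fin q → Fin 2)) : ℤ → (Fin q → Fin 2) :=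
  fun m j => if h : (j : ℕ) + 1 < q then x m ⟨(j : ℕ) + 1, h⟩ else x (m + p) ⟨0, j.pos⟩

lemma psi_shift (q : ℕ) (p : ℤ) (x : ℤ → (Fin q → Fin 2)) :
    psi q p (shift x) = shift (psi q p x) := by
  funext m j
  simp only [psi, shift]
  split
  · rfl
  · rw [show m + p + 1 = m + 1 + p by ring]

lemma psi_iter (q : ℕ) (p : ℤ) (n : ℕ) (x : ℤ → (Fin q → Fin 2)) (m : ℤ) (j : Fin q) :
    (psi q p)^[n] x m j
      = x (m + p * ((((j : ℕ) + n) / q : ℕ) : ℤ)) ⟨((j : ℕ) + n) % q, Nat.mod_lt _ j.pos⟩ := by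
  induction n generalizing m j with
  | zero =>
      simp [Nat.div_eq_of_lt j.isLt, Nat.mod_eq_of_lt j.isLt]
  | succ n ih =>
      rw [Function.iterate_succ_apply']
      simp only [psi]
      split
      · next h =>
          rw [ih m ⟨(j : ℕ) + 1, h⟩]
          simp only []
          rw [show (j : ℕ) + 1 + n = (j : ℕ) + (n + 1) by omega]
      · next h =>
          rw [ih (m + p) ⟨0, j.pos⟩]
          have hj : (j : ℕ) + (n + 1) = n + q := by have := j.isLt; omega
          rw [hj]
          simp only [Nat.add_div_right _ j.pos, Nat.add_mod_right, Nat.zero_add]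
          congr 1
          push_cast
          ring

lemma psi_bij (q : ℕ) (hq : 0 < q) (p : ℤ) : Function.Bijective (psi q p) := by
  have hzb : Function.Bijective (fun (x : ℤ → (Fin q → Fin 2)) => fun m => x (m + p)) := by
    rw [Function.bijective_iff_has_inverse]
    exact ⟨fun x m => x (m - p), fun x => by funext m; simp, fun x => by funext m; simp⟩
  have hiter : (psi q p)^[q] = fun x => fun m => x (m + p) := by
    funext x m j
    rw [psi_iter]
    have h1 : ((j : ℕ) + q) / q = 1 := by
      rw [Nat.add_div_right _ hq, Nat.div_eq_of_lt j.isLt]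
    have h2 : ((j : ℕ) + q) % q = (j : ℕ) := by
      rw [Nat.add_mod_right, Nat.mod_eq_of_lt j.isLt]
    simp [h1, h2]
  obtain ⟨q', rfl⟩ : ∃ q', q = q' + 1 := ⟨q - 1, by omega⟩
  constructor
  · have : Function.Injective ((psi (q' + 1) p)^[q' + 1]) := by
      rw [hiter]; exact hzb.injective
    rw [Function.iterate_succ] at this
    exact Function.Injective.of_comp this
  · have : Function.Surjective ((psi (q' + 1) p)^[q' + 1]) := by
      rw [hiter]; exact hzb.surjective
    rw [Function.iterate_succ'] at this
    exact Function.Surjective.of_comp this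

section Combined

variable {q N : ℕ} (e : Fin N ≃ (Fin q → Fin 2) × (Fin q → Fin 2)) (a b : ℤ)

def phi (x : ℤ → Fin N) : ℤ → Fin N :=
  fun m => e.symm (psi q a (fun k => (e (x k)).1) m, psi q b (fun k => (e (x k)).2) m)

lemma phi_iter (n : ℕ) (x : ℤ → Fin N) (m : ℤ) :
    (phi e a b)^[n] x m
      = e.symm ((psi q a)^[n] (fun k => (e (x k)).1) m,
                (psi q b)^[n] (fun k => (e (x k)).2) m) := by
  induction n generalizing x with
  | zero => simp
  | succ n ih =>
      rw [Function.iterate_succ_apply, ih]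
      have h1 : (fun k => (e (phi e a b x k)).1) = psi q a (fun k => (e (x k)).1) := by
        funext k; simp [phi]
      have h2 : (fun k => (e (phi e a b x k)).2) = psi q b (fun k => (e (x k)).2) := by
        funext k; simp [phi]
      rw [h1, h2, ← Function.iterate_succ_apply, ← Function.iterate_succ_apply]

lemma phi_shift (x : ℤ → Fin N) : phi e a b (shift x) = shift (phi e a b x) := by
  funext m
  have h1 : psi q a (fun k => (e (x (k + 1))).1) m = psi q a (fun k => (e (x k)).1) (m + 1) :=
    congrFun (psi_shift q a (fun k => (e (x k)).1)) m
  have h2 : psi q b (fun k => (e (x (k + 1))).2) m = psi q b (fun k => (e (x k)).2) (m + 1) :=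
    congrFun (psi_shift q b (fun k => (e (x k)).2)) m
  show e.symm _ = e.symm _
  rw [show (fun k => (e (shift x k)).1) = (fun k => (e (x (k + 1))).1) from rfl,
      show (fun k => (e (shift x k)).2) = (fun k => (e (x (k + 1))).2) from rfl, h1, h2]

lemma phi_bij (hq : 0 < q) : Function.Bijective (phi e a b) := by
  constructor
  · intro x y hxy
    have hpair : ∀ k, ((psi q a (fun k => (e (x k)).1) k, psi q b (fun k => (e (x k)).2) k)
        : (Fin q → Fin 2) × (Fin q → Fin 2))
        = (psi q a (fun k => (e (y k)).1) k, psi q b (fun k => (e (y k)).2) k) := by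
      intro k
      exact e.symm.injective (congrFun hxy k)
    have ha : (fun k => (e (x k)).1) = (fun k => (e (y k)).1) :=
      (psi_bij q hq a).injective (funext fun k => congrArg Prod.fst (hpair k))
    have hb : (fun k => (e (x k)).2) = (fun k => (e (y k)).2) :=
      (psi_bij q hq b).injective (funext fun k => congrArg Prod.snd (hpair k))
    funext k
    apply e.injective
    exact Prod.ext (congrFun ha k) (congrFun hb k)
  · intro z
    obtain ⟨u, hu⟩ := (psi_bij q hq a).surjective (fun k => (e (z k)).1)
    obtain ⟨v, hv⟩ := (psi_bij q hq b).surjective (fun k => (e (z k)).2)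
    refine ⟨fun k => e.symm (u k, v k), ?_⟩
    funext m
    simp only [phi, Equiv.apply_symm_apply]
    rw [hu, hv]
    simp

end Combined

section Coding

variable {q N : ℕ} (e : Fin N ≃ (Fin q → Fin 2) × (Fin q → Fin 2)) (a b : ℤ)

lemma mem_plusSet (n : ℕ) (W : ℤ)
    (ha : ∀ t : Fin q, -(a * ((((t : ℕ) + n) / q : ℕ) : ℤ)) ≤ W)
    (hb : ∀ t : Fin q, -(b * ((((t : ℕ) + n) / q : ℕ) : ℤ)) ≤ W) :
    W ∈ WplusSet (Set.univ : Set (ℤ → Fin N)) (phi e a b) n := by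
  intro x _ y _ hxy m hm
  have hm' : W ≤ m := hm
  rw [phi_iter, phi_iter]
  congr 1
  refine Prod.ext ?_ ?_
  · funext t
    dsimp only
    rw [psi_iter, psi_iter]
    have hpos : (0 : ℤ) ≤ m + a * ((((t : ℕ) + n) / q : ℕ) : ℤ) := by
      have := ha t; omega
    rw [hxy _ hpos]
  · funext t
    dsimp only
    rw [psi_iter, psi_iter]
    have hpos : (0 : ℤ) ≤ m + b * ((((t : ℕ) + n) / q : ℕ) : ℤ) := by
      have := hb t; omega
    rw [hxy _ hpos]

lemma mem_minusSet (n : ℕ) (W : ℤ)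
    (ha : ∀ t : Fin q, W ≤ -(a * ((((t : ℕ) + n) / q : ℕ) : ℤ)))
    (hb : ∀ t : Fin q, W ≤ -(b * ((((t : ℕ) + n) / q : ℕ) : ℤ))) :
    W ∈ WminusSet (Set.univ : Set (ℤ → Fin N)) (phi e a b) n := by
  intro x _ y _ hxy m hm
  have hm' : m ≤ W := hm
  rw [phi_iter, phi_iter]
  congr 1
  refine Prod.ext ?_ ?_
  · funext t
    dsimp only
    rw [psi_iter, psi_iter]
    have hpos : m + a * ((((t : ℕ) + n) / q : ℕ) : ℤ) ≤ 0 := by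
      have := ha t; omega
    rw [hxy _ hpos]
  · funext t
    dsimp only
    rw [psi_iter, psi_iter]
    have hpos : m + b * ((((t : ℕ) + n) / q : ℕ) : ℤ) ≤ 0 := by
      have := hb t; omega
    rw [hxy _ hpos]

end Coding

section Counter

variable {q N : ℕ} (e : Fin N ≃ (Fin q → Fin 2) × (Fin q → Fin 2)) (a b : ℤ)

lemma plus_lb_a (n : ℕ) (W : ℤ)
    (hW : W ∈ WplusSet (Set.univ : Set (ℤ → Fin N)) (phi e a b) n) (t : Fin q) :
    -(a * ((((t : ℕ) + n) / q : ℕ) : ℤ)) ≤ W := by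
  by_contra hcon
  push_neg at hcon
  set T : ℤ := ((((t : ℕ) + n) / q : ℕ) : ℤ) with hT
  set tr : Fin q := ⟨((t : ℕ) + n) % q, Nat.mod_lt _ t.pos⟩ with htr
  set z0 : Fin N := e.symm (fun _ => 0, fun _ => 0) with hz0
  set y : ℤ → Fin N :=
    fun k => if k = -1 then e.symm ((fun t' => if t' = tr then 1 else 0), fun _ => 0) else z0
    with hy
  set m : ℤ := -(a * T) - 1 with hmdef
  have hagree : ∀ i ∈ Set.Ici (0 : ℤ), (fun _ => z0 : ℤ → Fin N) i = y i := by
    intro i hi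
    have hi0 : (0 : ℤ) ≤ i := hi
    have hne : i ≠ -1 := by omega
    simp [hy, hne]
  have hm : m ∈ Set.Ici W := by
    have : W ≤ m := by rw [hmdef]; linarith
    exact this
  have heq := hW (fun _ => z0) (Set.mem_univ _) y (Set.mem_univ _) hagree m hm
  rw [phi_iter, phi_iter] at heq
  have h1 := congrFun (congrArg Prod.fst (e.symm.injective heq)) t
  dsimp only at h1
  rw [psi_iter, psi_iter] at h1
  have hm1 : m + a * T = -1 := by rw [hmdef]; ring
  rw [hm1] at h1
  have hyneg : y (-1) = e.symm ((fun t' => if t' = tr then 1 else 0), fun _ => 0) := by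
    simp [hy]
  rw [hyneg, hz0] at h1
  simp only [Equiv.apply_symm_apply] at h1
  simp at h1
  exact h1 htr.symm

lemma plus_lb_b (n : ℕ) (W : ℤ)
    (hW : W ∈ WplusSet (Set.univ : Set (ℤ → Fin N)) (phi e a b) n) (t : Fin q) :
    -(b * ((((t : ℕ) + n) / q : ℕ) : ℤ)) ≤ W := by
  by_contra hcon
  push_neg at hcon
  set T : ℤ := ((((t : ℕ) + n) / q : ℕ) : ℤ) with hT
  set tr : Fin q := ⟨((t : ℕ) + n) % q, Nat.mod_lt _ t.pos⟩ with htr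
  set z0 : Fin N := e.symm (fun _ => 0, fun _ => 0) with hz0
  set y : ℤ → Fin N :=
    fun k => if k = -1 then e.symm (fun _ => 0, (fun t' => if t' = tr then 1 else 0)) else z0
    with hy
  set m : ℤ := -(b * T) - 1 with hmdef
  have hagree : ∀ i ∈ Set.Ici (0 : ℤ), (fun _ => z0 : ℤ → Fin N) i = y i := by
    intro i hi
    have hi0 : (0 : ℤ) ≤ i := hi
    have hne : i ≠ -1 := by omega
    simp [hy, hne]
  have hm : m ∈ Set.Ici W := by
    have : W ≤ m := by rw [hmdef]; linarith
    exact this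
  have heq := hW (fun _ => z0) (Set.mem_univ _) y (Set.mem_univ _) hagree m hm
  rw [phi_iter, phi_iter] at heq
  have h1 := congrFun (congrArg Prod.snd (e.symm.injective heq)) t
  dsimp only at h1
  rw [psi_iter, psi_iter] at h1
  have hm1 : m + b * T = -1 := by rw [hmdef]; ring
  rw [hm1] at h1
  have hyneg : y (-1) = e.symm (fun _ => 0, (fun t' => if t' = tr then 1 else 0)) := by
    simp [hy]
  rw [hyneg, hz0] at h1
  simp only [Equiv.apply_symm_apply] at h1
  simp at h1
  exact h1 htr.symm

lemma minus_ub_a (n : ℕ) (W : ℤ)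
    (hW : W ∈ WminusSet (Set.univ : Set (ℤ → Fin N)) (phi e a b) n) (t : Fin q) :
    W ≤ -(a * ((((t : ℕ) + n) / q : ℕ) : ℤ)) := by
  by_contra hcon
  push_neg at hcon
  set T : ℤ := ((((t : ℕ) + n) / q : ℕ) : ℤ) with hT
  set tr : Fin q := ⟨((t : ℕ) + n) % q, Nat.mod_lt _ t.pos⟩ with htr
  set z0 : Fin N := e.symm (fun _ => 0, fun _ => 0) with hz0
  set y : ℤ → Fin N :=
    fun k => if k = 1 then e.symm ((fun t' => if t' = tr then 1 else 0), fun _ => 0) else z0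
    with hy
  set m : ℤ := -(a * T) + 1 with hmdef
  have hagree : ∀ i ∈ Set.Iic (0 : ℤ), (fun _ => z0 : ℤ → Fin N) i = y i := by
    intro i hi
    have hi0 : i ≤ (0 : ℤ) := hi
    have hne : i ≠ 1 := by omega
    simp [hy, hne]
  have hm : m ∈ Set.Iic W := by
    have : m ≤ W := by rw [hmdef]; linarith
    exact this
  have heq := hW (fun _ => z0) (Set.mem_univ _) y (Set.mem_univ _) hagree m hm
  rw [phi_iter, phi_iter] at heq
  have h1 := congrFun (congrArg Prod.fst (e.symm.injective heq)) t
  dsimp only at h1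
  rw [psi_iter, psi_iter] at h1
  have hm1 : m + a * T = 1 := by rw [hmdef]; ring
  rw [hm1] at h1
  have hyneg : y 1 = e.symm ((fun t' => if t' = tr then 1 else 0), fun _ => 0) := by
    simp [hy]
  rw [hyneg, hz0] at h1
  simp only [Equiv.apply_symm_apply] at h1
  simp at h1
  exact h1 htr.symm

lemma minus_ub_b (n : ℕ) (W : ℤ)
    (hW : W ∈ WminusSet (Set.univ : Set (ℤ → Fin N)) (phi e a b) n) (t : Fin q) :
    W ≤ -(b * ((((t : ℕ) + n) / q : ℕ) : ℤ)) := by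
  by_contra hcon
  push_neg at hcon
  set T : ℤ := ((((t : ℕ) + n) / q : ℕ) : ℤ) with hT
  set tr : Fin q := ⟨((t : ℕ) + n) % q, Nat.mod_lt _ t.pos⟩ with htr
  set z0 : Fin N := e.symm (fun _ => 0, fun _ => 0) with hz0
  set y : ℤ → Fin N :=
    fun k => if k = 1 then e.symm (fun _ => 0, (fun t' => if t' = tr then 1 else 0)) else z0
    with hy
  set m : ℤ := -(b * T) + 1 with hmdef
  have hagree : ∀ i ∈ Set.Iic (0 : ℤ), (fun _ => z0 : ℤ → Fin N) i = y i := by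
    intro i hi
    have hi0 : i ≤ (0 : ℤ) := hi
    have hne : i ≠ 1 := by omega
    simp [hy, hne]
  have hm : m ∈ Set.Iic W := by
    have : m ≤ W := by rw [hmdef]; linarith
    exact this
  have heq := hW (fun _ => z0) (Set.mem_univ _) y (Set.mem_univ _) hagree m hm
  rw [phi_iter, phi_iter] at heq
  have h1 := congrFun (congrArg Prod.snd (e.symm.injective heq)) t
  dsimp only at h1
  rw [psi_iter, psi_iter] at h1
  have hm1 : m + b * T = 1 := by rw [hmdef]; ring
  rw [hm1] at h1
  have hyneg : y 1 = e.symm (fun _ => 0, (fun t' => if t' = tr then 1 else 0)) := by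
    simp [hy]
  rw [hyneg, hz0] at h1
  simp only [Equiv.apply_symm_apply] at h1
  simp at h1
  exact h1 htr.symm

end Counter

lemma neg_mul_le_max (c u v s : ℤ) (h1 : u ≤ s) (h2 : s ≤ v) :
    -(c * s) ≤ max (-(c * u)) (-(c * v)) := by
  rcases le_total 0 c with hc | hc
  · exact le_max_of_le_left (by nlinarith)
  · exact le_max_of_le_right (by nlinarith)

lemma min_le_neg_mul (c u v s : ℤ) (h1 : u ≤ s) (h2 : s ≤ v) :
    min (-(c * u)) (-(c * v)) ≤ -(c * s) := by
  rcases le_total 0 c with hc | hc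
  · exact min_le_of_right_le (by nlinarith)
  · exact min_le_of_left_le (by nlinarith)

lemma lim_helper (u : ℕ → ℤ) (L C : ℝ) (hC : ∀ n : ℕ, |(u n : ℝ) - L * n| ≤ C) :
    Filter.Tendsto (fun n : ℕ => (u n : ℝ) / n) Filter.atTop (nhds L) := by
  have h0 : Filter.Tendsto (fun n : ℕ => (u n : ℝ) / n - L) Filter.atTop (nhds 0) := by
    refine squeeze_zero_norm' (a := fun n : ℕ => C / n) ?_ (tendsto_const_div_atTop_nhds_zero_nat C)
    filter_upwards [Filter.eventually_ge_atTop 1] with n hn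
    have hn' : (0 : ℝ) < n := by
      have : (1 : ℝ) ≤ n := by exact_mod_cast hn
      linarith
    rw [Real.norm_eq_abs, show (u n : ℝ) / n - L = ((u n : ℝ) - L * n) / n by field_simp,
      abs_div, abs_of_pos hn']
    gcongr
    exact hC n
  have := h0.add (tendsto_const_nhds (x := L))
  simpa using this

lemma term_bound (c : ℤ) (γ : ℝ) (qn : ℕ) (hγ : ((-c : ℤ) : ℝ) = γ * qn) (d : ℕ) (n : ℕ)
    (hlow : (n : ℤ) - qn ≤ qn * d) (hhigh : (qn : ℤ) * d ≤ n + qn) :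
    |((-(c * (d : ℤ)) : ℤ) : ℝ) - γ * n| ≤ |γ| * qn := by
  push_cast at hγ
  have h1 : ((-(c * (d : ℤ)) : ℤ) : ℝ) = γ * ((qn : ℝ) * d) := by
    push_cast
    linear_combination (d : ℝ) * hγ
  rw [h1, show γ * ((qn : ℝ) * d) - γ * n = γ * ((qn : ℝ) * d - n) by ring, abs_mul]
  have h2 : |(qn : ℝ) * d - n| ≤ qn := by
    rw [abs_le]
    constructor
    · have : ((n : ℝ)) - qn ≤ qn * d := by exact_mod_cast hlow
      linarith
    · have : (qn : ℝ) * d ≤ n + qn := by exact_mod_cast hhigh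
      linarith
  exact mul_le_mul_of_nonneg_left h2 (abs_nonneg γ)

/-- For any rationals `r₁ ≤ r₂` there is a full shift with an automorphism `φ`
(a bijective shift-commuting block code) such that `α⁻(φ) = r₁` and `α⁺(φ) = r₂`. -/
theorem alpha_realization (r₁ r₂ : ℚ) (h : r₁ ≤ r₂) :
    ∃ (N : ℕ) (φ : (ℤ → Fin N) → (ℤ → Fin N)),
      Function.Bijective φ ∧
      (∀ x : ℤ → Fin N, φ (shift x) = shift (φ x)) ∧
      (∃ R : ℕ, Codes (Set.univ : Set (ℤ → Fin N)) φ (Set.Icc (-(R : ℤ)) (R : ℤ)) {0}) ∧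
      ∃ Wp Wm : ℕ → ℤ,
        (∀ n, IsLeast (WplusSet (Set.univ : Set (ℤ → Fin N)) φ n) (Wp n)) ∧
        (∀ n, IsGreatest (WminusSet (Set.univ : Set (ℤ → Fin N)) φ n) (Wm n)) ∧
        Tendsto (fun n : ℕ => (Wm n : ℝ) / n) atTop (𝓝 (r₁ : ℝ)) ∧
        Tendsto (fun n : ℕ => (Wp n : ℝ) / n) atTop (𝓝 (r₂ : ℝ)) := by
  classical
  set q : ℕ := r₁.den * r₂.den with hq_def
  have hq : 0 < q := Nat.mul_pos r₁.pos r₂.pos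
  set a : ℤ := -(r₁.num * (r₂.den : ℤ)) with ha_def
  set b : ℤ := -(r₂.num * (r₁.den : ℤ)) with hb_def
  set e : Fin (2 ^ q * 2 ^ q) ≃ (Fin q → Fin 2) × (Fin q → Fin 2) :=
    finProdFinEquiv.symm.trans
      (Equiv.prodCongr finFunctionFinEquiv.symm finFunctionFinEquiv.symm) with he_def
  -- cast identities
  have hden1 : (r₁.den : ℝ) ≠ 0 := Nat.cast_ne_zero.mpr r₁.den_nz
  have hden2 : (r₂.den : ℝ) ≠ 0 := Nat.cast_ne_zero.mpr r₂.den_nz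
  have hA : ((-a : ℤ) : ℝ) = (r₁ : ℝ) * q := by
    rw [ha_def, neg_neg, hq_def, Rat.cast_def]
    push_cast
    field_simp
  have hB : ((-b : ℤ) : ℝ) = (r₂ : ℝ) * q := by
    rw [hb_def, neg_neg, hq_def, Rat.cast_def]
    push_cast
    field_simp
  -- division bounds
  have hdiv0 : ∀ n : ℕ, ((n : ℤ) - q ≤ q * ((n / q : ℕ) : ℤ)) ∧ ((q : ℤ) * ((n / q : ℕ) : ℤ) ≤ n + q) := by
    intro n
    have h1 := Nat.div_add_mod n q
    have h2 := Nat.mod_lt n hq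
    omega
  have hdiv1 : ∀ n : ℕ, ((n : ℤ) - q ≤ q * (((n + (q - 1)) / q : ℕ) : ℤ))
      ∧ ((q : ℤ) * (((n + (q - 1)) / q : ℕ) : ℤ) ≤ n + q) := by
    intro n
    have h1 := Nat.div_add_mod (n + (q - 1)) q
    have h2 := Nat.mod_lt (n + (q - 1)) hq
    omega
  refine ⟨2 ^ q * 2 ^ q, phi e a b, phi_bij e a b hq, phi_shift e a b, ?_, ?_⟩
  · -- block code radius
    refine ⟨a.natAbs + b.natAbs, ?_⟩
    intro x _ y _ hxy j hj
    have hj0 : j = 0 := hj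
    subst hj0
    show phi e a b x 0 = phi e a b y 0
    simp only [phi]
    congr 1
    refine Prod.ext ?_ ?_
    · funext t
      dsimp only
      simp only [psi]
      split
      · rw [hxy 0 (by simp only [Set.mem_Icc]; omega)]
      · rw [hxy (0 + a) (by simp only [Set.mem_Icc]; omega)]
    · funext t
      dsimp only
      simp only [psi]
      split
      · rw [hxy 0 (by simp only [Set.mem_Icc]; omega)]
      · rw [hxy (0 + b) (by simp only [Set.mem_Icc]; omega)]
  · refine ⟨fun n => max (max (-(a * ((n / q : ℕ) : ℤ))) (-(a * (((n + (q - 1)) / q : ℕ) : ℤ))))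
        (max (-(b * ((n / q : ℕ) : ℤ))) (-(b * (((n + (q - 1)) / q : ℕ) : ℤ)))),
        fun n => min (min (-(a * ((n / q : ℕ) : ℤ))) (-(a * (((n + (q - 1)) / q : ℕ) : ℤ))))
        (min (-(b * ((n / q : ℕ) : ℤ))) (-(b * (((n + (q - 1)) / q : ℕ) : ℤ)))), ?_, ?_, ?_, ?_⟩
    · -- IsLeast
      intro n
      constructor
      · apply mem_plusSet <;> intro t
        · refine le_trans (neg_mul_le_max a _ _ _ ?_ ?_) (le_max_left _ _)
          · exact_mod_cast Nat.div_le_div_right (by omega : n ≤ (t : ℕ) + n)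
          · exact_mod_cast Nat.div_le_div_right (by have := t.isLt; omega : (t : ℕ) + n ≤ n + (q - 1))
        · refine le_trans (neg_mul_le_max b _ _ _ ?_ ?_) (le_max_right _ _)
          · exact_mod_cast Nat.div_le_div_right (by omega : n ≤ (t : ℕ) + n)
          · exact_mod_cast Nat.div_le_div_right (by have := t.isLt; omega : (t : ℕ) + n ≤ n + (q - 1))
      · intro W hW
        have h00 : -(a * ((n / q : ℕ) : ℤ)) ≤ W := by
          simpa using plus_lb_a e a b n W hW ⟨0, hq⟩
        have h01 : -(a * (((n + (q - 1)) / q : ℕ) : ℤ)) ≤ W := by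
          have := plus_lb_a e a b n W hW ⟨q - 1, by omega⟩
          simpa [Nat.add_comm] using this
        have h10 : -(b * ((n / q : ℕ) : ℤ)) ≤ W := by
          simpa using plus_lb_b e a b n W hW ⟨0, hq⟩
        have h11 : -(b * (((n + (q - 1)) / q : ℕ) : ℤ)) ≤ W := by
          have := plus_lb_b e a b n W hW ⟨q - 1, by omega⟩
          simpa [Nat.add_comm] using this
        exact max_le (max_le h00 h01) (max_le h10 h11)
    · -- IsGreatest
      intro n
      constructor
      · apply mem_minusSet <;> intro t
        · refine le_trans (min_le_left _ _) (min_le_neg_mul a _ _ _ ?_ ?_)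
          · exact_mod_cast Nat.div_le_div_right (by omega : n ≤ (t : ℕ) + n)
          · exact_mod_cast Nat.div_le_div_right (by have := t.isLt; omega : (t : ℕ) + n ≤ n + (q - 1))
        · refine le_trans (min_le_right _ _) (min_le_neg_mul b _ _ _ ?_ ?_)
          · exact_mod_cast Nat.div_le_div_right (by omega : n ≤ (t : ℕ) + n)
          · exact_mod_cast Nat.div_le_div_right (by have := t.isLt; omega : (t : ℕ) + n ≤ n + (q - 1))
      · intro W hW
        have h00 : W ≤ -(a * ((n / q : ℕ) : ℤ)) := by
          simpa using minus_ub_a e a b n W hW ⟨0, hq⟩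
        have h01 : W ≤ -(a * (((n + (q - 1)) / q : ℕ) : ℤ)) := by
          have := minus_ub_a e a b n W hW ⟨q - 1, by omega⟩
          simpa [Nat.add_comm] using this
        have h10 : W ≤ -(b * ((n / q : ℕ) : ℤ)) := by
          simpa using minus_ub_b e a b n W hW ⟨0, hq⟩
        have h11 : W ≤ -(b * (((n + (q - 1)) / q : ℕ) : ℤ)) := by
          have := minus_ub_b e a b n W hW ⟨q - 1, by omega⟩
          simpa [Nat.add_comm] using this
        exact le_min (le_min h00 h01) (le_min h10 h11)
    · -- Wm limit
      apply lim_helper _ _ ((|(r₁ : ℝ)| + |(r₂ : ℝ)|) * q)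
      intro n
      rw [Int.cast_min, Int.cast_min, Int.cast_min]
      have hmin : (r₁ : ℝ) * n
          = min (min ((r₁ : ℝ) * n) ((r₁ : ℝ) * n)) (min ((r₂ : ℝ) * n) ((r₂ : ℝ) * n)) := by
        rw [min_self, min_self, min_eq_left
          (mul_le_mul_of_nonneg_right (by exact_mod_cast h) (Nat.cast_nonneg n))]
      rw [hmin]
      have hCa : |(r₁ : ℝ)| * q ≤ (|(r₁ : ℝ)| + |(r₂ : ℝ)|) * q := by
        nlinarith [abs_nonneg ((r₂ : ℝ)), Nat.cast_nonneg (α := ℝ) q]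
      have hCb : |(r₂ : ℝ)| * q ≤ (|(r₁ : ℝ)| + |(r₂ : ℝ)|) * q := by
        nlinarith [abs_nonneg ((r₁ : ℝ)), Nat.cast_nonneg (α := ℝ) q]
      refine le_trans (abs_min_sub_min_le_max _ _ _ _) (max_le ?_ ?_)
      · refine le_trans (abs_min_sub_min_le_max _ _ _ _) (max_le ?_ ?_)
        · exact le_trans (term_bound a ((r₁ : ℝ)) q hA _ n (hdiv0 n).1 (hdiv0 n).2) hCa
        · exact le_trans (term_bound a ((r₁ : ℝ)) q hA _ n (hdiv1 n).1 (hdiv1 n).2) hCa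
      · refine le_trans (abs_min_sub_min_le_max _ _ _ _) (max_le ?_ ?_)
        · exact le_trans (term_bound b ((r₂ : ℝ)) q hB _ n (hdiv0 n).1 (hdiv0 n).2) hCb
        · exact le_trans (term_bound b ((r₂ : ℝ)) q hB _ n (hdiv1 n).1 (hdiv1 n).2) hCb
    · -- Wp limit
      apply lim_helper _ _ ((|(r₁ : ℝ)| + |(r₂ : ℝ)|) * q)
      intro n
      rw [Int.cast_max, Int.cast_max, Int.cast_max]
      have hmax : (r₂ : ℝ) * n
          = max (max ((r₁ : ℝ) * n) ((r₁ : ℝ) * n)) (max ((r₂ : ℝ) * n) ((r₂ : ℝ) * n)) := by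
        rw [max_self, max_self, max_eq_right
          (mul_le_mul_of_nonneg_right (by exact_mod_cast h) (Nat.cast_nonneg n))]
      rw [hmax]
      have hCa : |(r₁ : ℝ)| * q ≤ (|(r₁ : ℝ)| + |(r₂ : ℝ)|) * q := by
        nlinarith [abs_nonneg ((r₂ : ℝ)), Nat.cast_nonneg (α := ℝ) q]
      have hCb : |(r₂ : ℝ)| * q ≤ (|(r₁ : ℝ)| + |(r₂ : ℝ)|) * q := by
        nlinarith [abs_nonneg ((r₁ : ℝ)), Nat.cast_nonneg (α := ℝ) q]
      refine le_trans (abs_max_sub_max_le_max _ _ _ _) (max_le ?_ ?_)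
      · refine le_trans (abs_max_sub_max_le_max _ _ _ _) (max_le ?_ ?_)
        · exact le_trans (term_bound a ((r₁ : ℝ)) q hA _ n (hdiv0 n).1 (hdiv0 n).2) hCa
        · exact le_trans (term_bound a ((r₁ : ℝ)) q hA _ n (hdiv1 n).1 (hdiv1 n).2) hCa
      · refine le_trans (abs_max_sub_max_le_max _ _ _ _) (max_le ?_ ?_)
        · exact le_trans (term_bound b ((r₂ : ℝ)) q hB _ n (hdiv0 n).1 (hdiv0 n).2) hCb
        · exact le_trans (term_bound b ((r₂ : ℝ)) q hB _ n (hdiv1 n).1 (hdiv1 n).2) hCb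
end

section
/- Let φ be an endomorphism of a subshift X and n ≥ 0. If an interval J ⊆ ℤ φ^n-codes {0}, then J contains the interval I(-n, φ) = [-W^+(n, φ), -W^-(n, φ)]. -/
open Filter Topology

lemma shift_injective {A : Type*} : Function.Injective (shift (A := A)) := by
  intro u v h
  funext m
  have := congrFun h (m - 1)
  simpa [shift] using this

lemma zshift_mem_s14 {A : Type*} [TopologicalSpace A] {X : Set (ℤ → A)}
    (hX : IsSubshift X) (k : ℤ) {x : ℤ → A} (hx : x ∈ X) : zshift k x ∈ X := by
  induction k using Int.induction_on with
  | zero =>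
      have h0 : zshift (0:ℤ) x = x := by funext m; simp [zshift]
      rw [h0]; exact hx
  | succ k ih =>
      have h1 : zshift (k + 1 : ℤ) x = shift (zshift k x) := by
        funext m; simp only [zshift, shift]; congr 1; ring
      rw [h1, ← hX.2]
      exact Set.mem_image_of_mem _ ih
  | pred k ih =>
      have h1 : shift (zshift (-(k+1) : ℤ) x) = zshift (-(k : ℤ)) x := by
        funext m; simp only [zshift, shift]; congr 1; ring
      have h2 : zshift (-(k : ℤ)) x ∈ shift '' X := by rw [hX.2]; exact ih
      obtain ⟨y, hy, hyy⟩ := h2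
      have h3 : y = zshift (-(k+1) : ℤ) x := shift_injective (by rw [hyy, ← h1])
      have h4 : (-(k:ℤ)-1) = -((k:ℤ)+1) := by ring
      rw [h4, ← h3]; exact hy

lemma iter_mem {A : Type*} [TopologicalSpace A] {X : Set (ℤ → A)}
    {φ : (ℤ → A) → (ℤ → A)} (hφ : IsEndo X φ) (n : ℕ) {x : ℤ → A} (hx : x ∈ X) :
    φ^[n] x ∈ X := by
  induction n with
  | zero => simpa using hx
  | succ n ih => rw [Function.iterate_succ_apply']; exact hφ.maps ih

lemma iter_shift {A : Type*} [TopologicalSpace A] {X : Set (ℤ → A)}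
    {φ : (ℤ → A) → (ℤ → A)} (hφ : IsEndo X φ) (n : ℕ) {x : ℤ → A} (hx : x ∈ X) :
    φ^[n] (shift x) = shift (φ^[n] x) := by
  induction n with
  | zero => simp
  | succ n ih =>
      rw [Function.iterate_succ_apply', Function.iterate_succ_apply', ih,
        hφ.comm _ (iter_mem hφ n hx)]

lemma iter_zshift {A : Type*} [TopologicalSpace A] {X : Set (ℤ → A)}
    (hX : IsSubshift X) {φ : (ℤ → A) → (ℤ → A)} (hφ : IsEndo X φ) (n : ℕ) (k : ℤ)
    {x : ℤ → A} (hx : x ∈ X) :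
    φ^[n] (zshift k x) = zshift k (φ^[n] x) := by
  induction k using Int.induction_on with
  | zero =>
      have h0 : ∀ y : ℤ → A, zshift 0 y = y := fun y => by funext m; simp [zshift]
      rw [h0, h0]
  | succ k ih =>
      have h1 : ∀ y : ℤ → A, zshift (k + 1 : ℤ) y = shift (zshift k y) := by
        intro y; funext m; simp only [zshift, shift]; congr 1; ring
      rw [h1, h1, iter_shift hφ n (zshift_mem_s14 hX k hx), ih]
  | pred k ih =>
      have h1 : ∀ y : ℤ → A, shift (zshift (-(k+1) : ℤ) y) = zshift (-(k:ℤ)) y := by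
        intro y; funext m; simp only [zshift, shift]; congr 1; ring
      have h4 : (-(k:ℤ)-1) = -((k:ℤ)+1) := by ring
      rw [h4]
      apply shift_injective
      rw [← iter_shift hφ n (zshift_mem_s14 hX (-(k+1)) hx), h1, h1, ih]

/-- Any interval which φⁿ-codes `{0}` contains `I(-n, φ) = [-W⁺(n,φ), -W⁻(n,φ)]`. -/
theorem interval_code_contains {A : Type*} [Fintype A] [TopologicalSpace A]
    [DiscreteTopology A] (X : Set (ℤ → A)) (hX : IsSubshift X) (hinf : X.Infinite)
    (φ : (ℤ → A) → (ℤ → A)) (hφ : IsEndo X φ) (n : ℕ)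
    (Wp Wm : ℤ)
    (hWp : IsLeast (WplusSet X φ n) Wp)
    (hWm : IsGreatest (WminusSet X φ n) Wm)
    (a b : ℤ) (hcode : Codes X (φ^[n]) (Set.Icc a b) {0}) :
    Set.Icc (-Wp) (-Wm) ⊆ Set.Icc a b := by
  have hmemp : (-a) ∈ WplusSet X φ n := by
    intro x hx y hy hagree j hj
    have hj' : -a ≤ j := hj
    have hagree' : ∀ i ∈ Set.Icc a b, zshift j x i = zshift j y i := by
      intro i hi
      simp only [Set.mem_Icc] at hi
      simp only [zshift]
      exact hagree (i + j) (by simp only [Set.mem_Ici]; omega)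
    have h0 := hcode _ (zshift_mem_s14 hX j hx) _ (zshift_mem_s14 hX j hy) hagree' 0 rfl
    rw [iter_zshift hX hφ n j hx, iter_zshift hX hφ n j hy] at h0
    simpa [zshift] using h0
  have hmemm : (-b) ∈ WminusSet X φ n := by
    intro x hx y hy hagree j hj
    have hj' : j ≤ -b := hj
    have hagree' : ∀ i ∈ Set.Icc a b, zshift j x i = zshift j y i := by
      intro i hi
      simp only [Set.mem_Icc] at hi
      simp only [zshift]
      exact hagree (i + j) (by simp only [Set.mem_Iic]; omega)
    have h0 := hcode _ (zshift_mem_s14 hX j hx) _ (zshift_mem_s14 hX j hy) hagree' 0 rfl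
    rw [iter_zshift hX hφ n j hx, iter_zshift hX hφ n j hy] at h0
    simpa [zshift] using h0
  have hp : Wp ≤ -a := hWp.2 hmemp
  have hm : -b ≤ Wm := hWm.2 hmemm
  intro z hz
  simp only [Set.mem_Icc] at hz ⊢
  omega
end

section
/- Let X be a subshift of finite type and φ an endomorphism of X. If liminf_{n→∞} |I(-n, φ)| < ∞, then φ has finite order in End(X, σ)/⟨σ⟩; that is, there exist integers m ≥ 1 and k such that φ^m = σ^k. -/
open Filter Topology

/-- For an SFT, if `liminf |I(-n,φ)| < ∞` then `φ` has finite order in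
`End(X,σ)/⟨σ⟩`: some `φᵐ` (`m ≥ 1`) equals a power `σᵏ` of the shift on `X`. -/
theorem finite_order_mod_shift {A : Type*} [Fintype A] [TopologicalSpace A]
    [DiscreteTopology A] (X : Set (ℤ → A)) (hX : IsSubshift X) (hSFT : IsSFT X)
    (hinf : X.Infinite)
    (φ : (ℤ → A) → (ℤ → A)) (hφ : IsEndo X φ)
    (Wp Wm : ℕ → ℤ)
    (hWp : ∀ n, IsLeast (WplusSet X φ n) (Wp n))
    (hWm : ∀ n, IsGreatest (WminusSet X φ n) (Wm n))
    (C : ℤ) (hC : {n : ℕ | Wp n - Wm n + 1 ≤ C}.Infinite) :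
    ∃ m : ℕ, 1 ≤ m ∧ ∃ k : ℤ, ∀ x ∈ X, φ^[m] x = zshift k x := by
  classical
  obtain ⟨F, hF, hmemF⟩ := hSFT
  obtain ⟨x0, hx0⟩ := hinf.nonempty
  haveI : Nonempty A := ⟨x0 0⟩
  -- basic facts about the shift
  have shift_inj : Function.Injective (shift (A := A)) := by
    intro x y h
    funext n
    have h1 := congrFun h (n - 1)
    simpa [shift] using h1
  have mem_shift : ∀ x ∈ X, shift x ∈ X := by
    intro x hx
    rw [← hX.2]
    exact ⟨x, hx, rfl⟩
  have shift_mem : ∀ x : ℤ → A, shift x ∈ X → x ∈ X := by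
    intro x hx
    rw [← hX.2] at hx
    obtain ⟨y, hy, hyx⟩ := hx
    rwa [← shift_inj hyx]
  have zshift_succ : ∀ (j : ℤ) (x : ℤ → A), zshift (j + 1) x = shift (zshift j x) := by
    intro j x
    funext n
    simp only [zshift, shift]
    congr 1
    ring
  have zshift_zero : ∀ x : ℤ → A, zshift 0 x = x := by
    intro x
    funext n
    simp [zshift]
  have zshift_mem : ∀ (j : ℤ), ∀ x ∈ X, zshift j x ∈ X := by
    intro j
    induction j using Int.induction_on with
    | zero => intro x hx; rwa [zshift_zero]
    | succ j ih =>
        intro x hx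
        rw [zshift_succ]
        exact mem_shift _ (ih x hx)
    | pred j ih =>
        intro x hx
        apply shift_mem
        have e : (-(j:ℤ) - 1) + 1 = -j := by ring
        rw [← zshift_succ, e]
        exact ih x hx
  have comm_z : ∀ (j : ℤ), ∀ x ∈ X, φ (zshift j x) = zshift j (φ x) := by
    intro j
    induction j using Int.induction_on with
    | zero => intro x hx; rw [zshift_zero, zshift_zero]
    | succ j ih =>
        intro x hx
        rw [zshift_succ, zshift_succ, hφ.comm _ (zshift_mem _ x hx), ih x hx]
    | pred j ih =>
        intro x hx
        apply shift_inj
        have e : (-(j:ℤ) - 1) + 1 = -j := by ring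
        rw [← hφ.comm _ (zshift_mem _ x hx), ← zshift_succ, ← zshift_succ, e]
        exact ih x hx
  have maps_iter : ∀ n : ℕ, Set.MapsTo (φ^[n]) X X := fun n => hφ.maps.iterate n
  have surj_iter : ∀ n : ℕ, Set.SurjOn (φ^[n]) X X := by
    intro n
    induction n with
    | zero => simpa using Set.surjOn_id X
    | succ n ih =>
        rw [Function.iterate_succ]
        exact ih.comp hφ.surj
  have comm_iter : ∀ (n : ℕ) (j : ℤ), ∀ x ∈ X, φ^[n] (zshift j x) = zshift j (φ^[n] x) := by
    intro n j
    induction n with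
    | zero => intro x hx; simp
    | succ n ih =>
        intro x hx
        rw [Function.iterate_succ_apply, Function.iterate_succ_apply,
          comm_z j x hx, ih (φ x) (hφ.maps hx)]
  -- shifted coding lemmas
  have code_p : ∀ (n : ℕ) (t : ℤ), ∀ x ∈ X, ∀ y ∈ X,
      (∀ i : ℤ, t ≤ i → x i = y i) → ∀ j : ℤ, Wp n + t ≤ j → φ^[n] x j = φ^[n] y j := by
    intro n t x hx y hy hagree j hj
    have hc : Codes X (φ^[n]) (Set.Ici 0) (Set.Ici (Wp n)) := (hWp n).1
    have h1 : φ^[n] (zshift t x) (j - t) = φ^[n] (zshift t y) (j - t) := by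
      apply hc _ (zshift_mem t x hx) _ (zshift_mem t y hy)
      · intro i hi
        have hi' : (0:ℤ) ≤ i := hi
        exact hagree (i + t) (by linarith)
      · show Wp n ≤ j - t
        linarith
    rw [comm_iter n t x hx, comm_iter n t y hy] at h1
    have e : j - t + t = j := by ring
    simpa only [zshift, e] using h1
  have code_m : ∀ (n : ℕ) (t : ℤ), ∀ x ∈ X, ∀ y ∈ X,
      (∀ i : ℤ, i ≤ t → x i = y i) → ∀ j : ℤ, j ≤ Wm n + t → φ^[n] x j = φ^[n] y j := by
    intro n t x hx y hy hagree j hj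
    have hc : Codes X (φ^[n]) (Set.Iic 0) (Set.Iic (Wm n)) := (hWm n).1
    have h1 : φ^[n] (zshift t x) (j - t) = φ^[n] (zshift t y) (j - t) := by
      apply hc _ (zshift_mem t x hx) _ (zshift_mem t y hy)
      · intro i hi
        have hi' : i ≤ (0:ℤ) := hi
        exact hagree (i + t) (by linarith)
      · show j - t ≤ Wm n
        linarith
    rw [comm_iter n t x hx, comm_iter n t y hy] at h1
    have e : j - t + t = j := by ring
    simpa only [zshift, e] using h1
  -- the splicing lemma from the SFT structure
  have splice : ∀ (a b : ℤ), (∀ w ∈ F, (w.length : ℤ) ≤ b - a + 1) →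
      ∀ x ∈ X, ∀ y ∈ X, (∀ t : ℤ, a ≤ t → t ≤ b → x t = y t) →
      (fun t => if t < a then x t else y t) ∈ X := by
    intro a b hlen x hx y hy hagree
    rw [hmemF]
    intro m w hw
    by_cases hm : a ≤ m
    · obtain ⟨i, hi⟩ := (hmemF y).mp hy m w hw
      refine ⟨i, ?_⟩
      have hnn : (0:ℤ) ≤ ((i : ℕ) : ℤ) := Int.natCast_nonneg _
      have h2 : ¬ (m + ((i : ℕ) : ℤ) < a) := by omega
      simpa only [if_neg h2] using hi
    · obtain ⟨i, hi⟩ := (hmemF x).mp hx m w hw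
      refine ⟨i, ?_⟩
      by_cases h2 : m + ((i : ℕ) : ℤ) < a
      · simpa only [if_pos h2] using hi
      · have hiw : ((i : ℕ) : ℤ) < (w.length : ℤ) := by exact_mod_cast i.2
        have hlw := hlen w hw
        have hub : m + ((i : ℕ) : ℤ) ≤ b := by omega
        have heq := hagree (m + ((i : ℕ) : ℤ)) (by omega) hub
        simp only [if_neg h2]
        rw [← heq]
        exact hi
  -- a uniform window size
  obtain ⟨D, hDC, hDw⟩ : ∃ D : ℕ, C ≤ (D:ℤ) ∧ ∀ w ∈ F, (w.length : ℤ) ≤ (D:ℤ) := by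
    refine ⟨C.toNat + hF.toFinset.sup List.length, ?_, ?_⟩
    · have h1 := Int.self_le_toNat C
      push_cast
      omega
    · intro w hw
      have h1 : w.length ≤ hF.toFinset.sup List.length := Finset.le_sup (hF.mem_toFinset.mpr hw)
      push_cast
      omega
  -- key: for good n, the window [-Wp n, -Wp n + D] determines φ^[n] at 0
  have key : ∀ n ∈ {n : ℕ | Wp n - Wm n + 1 ≤ C}, ∀ x ∈ X, ∀ y ∈ X,
      (∀ i : ℤ, -Wp n ≤ i → i ≤ -Wp n + (D:ℤ) → x i = y i) → φ^[n] x 0 = φ^[n] y 0 := by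
    intro n hn x hx y hy hagree
    have hCn : Wp n - Wm n + 1 ≤ C := hn
    have hz : (fun t => if t < -Wp n then x t else y t) ∈ X := by
      apply splice (-Wp n) (-Wp n + (D:ℤ)) ?_ x hx y hy hagree
      intro w hw
      have := hDw w hw
      omega
    set z : ℤ → A := fun t => if t < -Wp n then x t else y t with hzdef
    have h1 : φ^[n] z 0 = φ^[n] x 0 := by
      apply code_m n (-Wm n) z hz x hx ?_ 0 (by omega)
      intro i hi
      by_cases h2 : i < -Wp n
      · simp only [hzdef, if_pos h2]
      · have hib : i ≤ -Wp n + (D:ℤ) := by omega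
        simp only [hzdef, if_neg h2]
        exact (hagree i (by omega) hib).symm
    have h2 : φ^[n] z 0 = φ^[n] y 0 := by
      apply code_p n (-Wp n) z hz y hy ?_ 0 (by omega)
      intro i hi
      have h3 : ¬ (i < -Wp n) := not_lt.mpr hi
      simp only [hzdef, if_neg h3]
    rw [← h1, h2]
  -- the local rule
  set g : ℕ → (Fin (D + 1) → A) → A := fun n u =>
    if h : ∃ x, x ∈ X ∧ ∀ i : Fin (D + 1), x (-Wp n + ((i : ℕ) : ℤ)) = u i
    then φ^[n] h.choose 0 else Classical.arbitrary A
    with hgdef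
  have g_eval : ∀ n ∈ {n : ℕ | Wp n - Wm n + 1 ≤ C}, ∀ x ∈ X,
      g n (fun i : Fin (D + 1) => x (-Wp n + ((i : ℕ) : ℤ))) = φ^[n] x 0 := by
    intro n hn x hx
    have hex : ∃ x', x' ∈ X ∧ ∀ i : Fin (D + 1),
        x' (-Wp n + ((i : ℕ) : ℤ)) = x (-Wp n + ((i : ℕ) : ℤ)) := ⟨x, hx, fun _ => rfl⟩
    simp only [hgdef, dif_pos hex]
    apply key n hn _ hex.choose_spec.1 x hx
    intro i hi1 hi2
    have hj : 0 ≤ i + Wp n := by omega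
    have hj2 : (i + Wp n).toNat < D + 1 := by omega
    have h3 := hex.choose_spec.2 ⟨(i + Wp n).toNat, hj2⟩
    have hcast : -Wp n + ((((⟨(i + Wp n).toNat, hj2⟩ : Fin (D + 1)) : ℕ)) : ℤ) = i := by
      simp only [Fin.val_mk]
      omega
    rwa [hcast] at h3
  have g_eval' : ∀ n ∈ {n : ℕ | Wp n - Wm n + 1 ≤ C}, ∀ x ∈ X, ∀ j : ℤ,
      φ^[n] x j = g n (fun i : Fin (D + 1) => x (j - Wp n + ((i : ℕ) : ℤ))) := by
    intro n hn x hx j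
    have h1 := g_eval n hn (zshift j x) (zshift_mem j x hx)
    rw [comm_iter n j x hx] at h1
    have e1 : zshift j (φ^[n] x) 0 = φ^[n] x j := by
      show φ^[n] x (0 + j) = φ^[n] x j
      rw [zero_add]
    rw [e1] at h1
    rw [← h1]
    congr 1
    funext i
    show x (-Wp n + ((i : ℕ) : ℤ) + j) = x (j - Wp n + ((i : ℕ) : ℤ))
    congr 1
    ring
  -- pigeonhole
  have main : ∀ n1 ∈ {n : ℕ | Wp n - Wm n + 1 ≤ C}, ∀ n2 ∈ {n : ℕ | Wp n - Wm n + 1 ≤ C},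
      n1 < n2 → g n1 = g n2 →
      ∃ m : ℕ, 1 ≤ m ∧ ∃ k : ℤ, ∀ x ∈ X, φ^[m] x = zshift k x := by
    intro n1 hn1 n2 hn2 hlt heq
    refine ⟨n2 - n1, by omega, Wp n1 - Wp n2, ?_⟩
    intro y hy
    obtain ⟨x, hx, rfl⟩ := surj_iter n1 hy
    funext j
    have e2 : φ^[n2 - n1] (φ^[n1] x) = φ^[n2] x := by
      rw [← Function.iterate_add_apply]
      congr 1
      omega
    rw [e2]
    have hL := g_eval' n2 hn2 x hx j
    have hR := g_eval' n1 hn1 x hx (j + (Wp n1 - Wp n2))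
    show φ^[n2] x j = φ^[n1] x (j + (Wp n1 - Wp n2))
    rw [hL, hR, heq]
    congr 1
    funext i
    congr 1
    ring
  haveI : Finite ((Fin (D + 1) → A) → A) := by infer_instance
  obtain ⟨n1, hn1, n2, hn2, hne, heq⟩ :=
    hC.exists_ne_map_eq_of_mapsTo (f := g) (Set.mapsTo_univ g _) Set.finite_univ
  rcases lt_or_gt_of_ne hne with h | h
  · exact main n1 hn1 n2 hn2 h heq
  · exact main n2 hn2 n1 hn1 h heq.symm
end

section
/- Let X be a subshift of finite type and φ ∈ End(X, σ) of infinite order in End(X, σ)/⟨σ⟩. Then for all sufficiently large n, I(-n, φ) = [-W^+(n,φ), -W^-(n,φ)] is the unique minimal interval that φ^n-codes {0}. -/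
open Filter Topology

namespace SFTAux

variable {A : Type*} {X : Set (ℤ → A)}

lemma zshift_add (k l : ℤ) (x : ℤ → A) : zshift k (zshift l x) = zshift (l + k) x := by
  funext n; simp only [zshift]; ring_nf

lemma zshift_zero (x : ℤ → A) : zshift 0 x = x := by funext n; simp [zshift]

lemma shift_eq (x : ℤ → A) : shift x = zshift 1 x := rfl

variable [TopologicalSpace A]

lemma shift_mem (hX : IsSubshift X) {x : ℤ → A} (hx : x ∈ X) : shift x ∈ X := by
  rw [← hX.2]; exact ⟨x, hx, rfl⟩

lemma shiftinv_mem (hX : IsSubshift X) {x : ℤ → A} (hx : x ∈ X) : zshift (-1) x ∈ X := by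
  rw [← hX.2] at hx
  obtain ⟨z, hz, rfl⟩ := hx
  have : zshift (-1) (shift z) = z := by
    rw [shift_eq, zshift_add]; simp [zshift_zero]
  rw [this]; exact hz

lemma zshift_mem (hX : IsSubshift X) (k : ℤ) {x : ℤ → A} (hx : x ∈ X) : zshift k x ∈ X := by
  induction k using Int.induction_on with
  | zero => rw [zshift_zero]; exact hx
  | succ n ih =>
      have : zshift ((n : ℤ) + 1) x = shift (zshift n x) := by
        rw [shift_eq, zshift_add]
      rw [this]; exact shift_mem hX ih
  | pred n ih =>
      have : zshift (-(n : ℤ) - 1) x = zshift (-1) (zshift (-n) x) := by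
        rw [zshift_add]; ring_nf
      rw [this]; exact shiftinv_mem hX ih

lemma endo_comm_zshift (hX : IsSubshift X) {φ : (ℤ → A) → (ℤ → A)} (hφ : IsEndo X φ)
    (k : ℤ) : ∀ x ∈ X, φ (zshift k x) = zshift k (φ x) := by
  have hneg : ∀ x ∈ X, φ (zshift (-1) x) = zshift (-1) (φ x) := by
    intro x hx
    rw [← hX.2] at hx
    obtain ⟨z, hz, rfl⟩ := hx
    have h1 : zshift (-1) (shift z) = z := by rw [shift_eq, zshift_add]; simp [zshift_zero]
    rw [h1, hφ.comm z hz, shift_eq, zshift_add]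
    simp [zshift_zero]
  induction k using Int.induction_on with
  | zero => intro x hx; simp [zshift_zero]
  | succ n ih =>
      intro x hx
      have h1 : zshift ((n : ℤ) + 1) x = shift (zshift n x) := by rw [shift_eq, zshift_add]
      rw [h1, hφ.comm _ (zshift_mem hX n hx), ih x hx, shift_eq, zshift_add]
  | pred n ih =>
      intro x hx
      have h1 : zshift (-(n : ℤ) - 1) x = zshift (-1) (zshift (-n) x) := by
        rw [zshift_add]; ring_nf
      rw [h1, hneg _ (zshift_mem hX (-n) hx), ih x hx, zshift_add]
      ring_nf

lemma mapsTo_iter {φ : (ℤ → A) → (ℤ → A)} (hφ : IsEndo X φ) (n : ℕ) :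
    Set.MapsTo (φ^[n]) X X := by
  induction n with
  | zero => simpa using Set.mapsTo_id X
  | succ n ih =>
      intro x hx
      rw [Function.iterate_succ_apply']
      exact hφ.maps (ih hx)

lemma surjOn_iter {φ : (ℤ → A) → (ℤ → A)} (hφ : IsEndo X φ) (n : ℕ) :
    Set.SurjOn (φ^[n]) X X := by
  induction n with
  | zero => simpa using Set.surjOn_id X
  | succ n ih =>
      rw [Function.iterate_succ']
      exact hφ.surj.comp ih

lemma comm_iter (hX : IsSubshift X) {φ : (ℤ → A) → (ℤ → A)} (hφ : IsEndo X φ) (n : ℕ)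
    (k : ℤ) : ∀ x ∈ X, φ^[n] (zshift k x) = zshift k (φ^[n] x) := by
  induction n with
  | zero => intro x _; simp
  | succ n ih =>
      intro x hx
      rw [Function.iterate_succ_apply', Function.iterate_succ_apply',
        ih x hx, endo_comm_zshift hX hφ k _ (mapsTo_iter hφ n hx)]

omit [TopologicalSpace A] in
lemma codes_mono {ψ : (ℤ → A) → (ℤ → A)} {S T S' T' : Set ℤ}
    (h : Codes X ψ S T) (hS : S ⊆ S') (hT : T' ⊆ T) : Codes X ψ S' T' := by
  intro x hx y hy hagree j hj
  exact h x hx y hy (fun i hi => hagree i (hS hi)) j (hT hj)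

lemma codes_zshift (hX : IsSubshift X) {ψ : (ℤ → A) → (ℤ → A)}
    (hcomm : ∀ k : ℤ, ∀ x ∈ X, ψ (zshift k x) = zshift k (ψ x))
    {S T : Set ℤ} (h : Codes X ψ S T) (k : ℤ) :
    Codes X ψ {m | m - k ∈ S} {m | m - k ∈ T} := by
  intro x hx y hy hagree j hj
  have hx' : zshift k x ∈ X := zshift_mem hX k hx
  have hy' : zshift k y ∈ X := zshift_mem hX k hy
  have hagr : ∀ i ∈ S, zshift k x i = zshift k y i := by
    intro i hi
    show x (i + k) = y (i + k)
    exact hagree (i + k) (by simpa using hi)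
  have := h _ hx' _ hy' hagr (j - k) hj
  rw [hcomm k x hx, hcomm k y hy] at this
  simpa [zshift, sub_add_cancel] using this


omit [TopologicalSpace A] in
lemma glue_mem {F : Set (List A)}
    (hspec : ∀ x : ℤ → A, x ∈ X ↔ ∀ (n : ℤ), ∀ w ∈ F, ∃ i : Fin w.length, x (n + i) ≠ w.get i)
    {M : ℕ} (hM : ∀ w ∈ F, w.length ≤ M)
    {x y : ℤ → A} (hx : x ∈ X) (hy : y ∈ X) {a b : ℤ} (hab : (M : ℤ) - 2 ≤ b - a)
    (hagree : ∀ i ∈ Set.Icc a b, x i = y i) :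
    (fun i => if i ≤ b then x i else y i) ∈ X := by
  rw [hspec]
  intro n w hw
  by_cases hcase : n + (w.length : ℤ) - 1 ≤ b
  · obtain ⟨i, hi⟩ := (hspec x).mp hx n w hw
    refine ⟨i, ?_⟩
    have hib : n + (i : ℤ) ≤ b := by
      have := i.isLt
      omega
    simpa [if_pos hib] using hi
  · obtain ⟨i, hi⟩ := (hspec y).mp hy n w hw
    refine ⟨i, ?_⟩
    have hna : a ≤ n := by
      have hle := hM w hw
      omega
    have : (if n + (i : ℤ) ≤ b then x (n + i) else y (n + i)) = y (n + i) := by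
      by_cases h2 : n + (i : ℤ) ≤ b
      · rw [if_pos h2]
        exact hagree _ ⟨by omega, h2⟩
      · rw [if_neg h2]
    simpa [this] using hi

open Classical in
noncomputable def fcode (X : Set (ℤ → A)) (ψ : (ℤ → A) → (ℤ → A))
    (c : ℕ) (p : ℤ) (x₀ : ℤ → A) (u : Fin (c + 1) → A) : A :=
  if h : ∃ z, z ∈ X ∧ ∀ i : Fin (c + 1), z (i : ℤ) = u i then ψ h.choose p else ψ x₀ p

lemma fcode_spec (hX : IsSubshift X) {ψ : (ℤ → A) → (ℤ → A)}
    (hcomm : ∀ k : ℤ, ∀ x ∈ X, ψ (zshift k x) = zshift k (ψ x))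
    {c : ℕ} {p : ℤ} (x₀ : ℤ → A)
    (hcode : Codes X ψ (Set.Icc 0 (c : ℤ)) {p})
    (x : ℤ → A) (hx : x ∈ X) (j : ℤ) :
    ψ x j = fcode X ψ c p x₀ (fun i => x (j - p + i)) := by
  set u : Fin (c + 1) → A := fun i => x (j - p + i) with hu
  have hy : zshift (j - p) x ∈ X := zshift_mem hX _ hx
  have hex : ∃ z, z ∈ X ∧ ∀ i : Fin (c + 1), z (i : ℤ) = u i := by
    refine ⟨zshift (j - p) x, hy, fun i => ?_⟩
    show x ((i : ℤ) + (j - p)) = x (j - p + i)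
    ring_nf
  rw [fcode, dif_pos hex]
  obtain ⟨hzX, hz⟩ := hex.choose_spec
  have hagr : ∀ i ∈ Set.Icc (0 : ℤ) (c : ℤ), hex.choose i = zshift (j - p) x i := by
    intro i hi
    obtain ⟨hi0, hic⟩ := hi
    have h1 : i.toNat < c + 1 := by omega
    have h2 := hz ⟨i.toNat, h1⟩
    have h3 : ((⟨i.toNat, h1⟩ : Fin (c + 1)) : ℤ) = i := by
      simp [Int.toNat_of_nonneg hi0]
    rw [h3] at h2
    rw [h2]
    show x (j - p + ((⟨i.toNat, h1⟩ : Fin (c + 1)) : ℤ)) = x (i + (j - p))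
    rw [h3]; ring_nf
  have hmain := hcode _ hzX _ hy hagr p rfl
  rw [hmain, hcomm (j - p) x hx]
  show ψ x j = ψ x (p + (j - p))
  ring_nf

end SFTAux

/-- For an SFT and `φ` of infinite order in `End(X,σ)/⟨σ⟩`, for all large `n` the
interval `I(-n,φ) = [-W⁺(n), -W⁻(n)]` is the unique minimal interval φⁿ-coding `{0}`. -/
theorem unique_minimal_coding_interval {A : Type*} [Fintype A] [TopologicalSpace A]
    [DiscreteTopology A] (X : Set (ℤ → A)) (hX : IsSubshift X) (hSFT : IsSFT X)
    (hinf : X.Infinite)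
    (φ : (ℤ → A) → (ℤ → A)) (hφ : IsEndo X φ)
    (hord : ¬ ∃ m : ℕ, 1 ≤ m ∧ ∃ k : ℤ, ∀ x ∈ X, φ^[m] x = zshift k x)
    (Wp Wm : ℕ → ℤ)
    (hWp : ∀ n, IsLeast (WplusSet X φ n) (Wp n))
    (hWm : ∀ n, IsGreatest (WminusSet X φ n) (Wm n)) :
    ∃ n₀ : ℕ, ∀ n : ℕ, n₀ ≤ n →
      Codes X (φ^[n]) (Set.Icc (-(Wp n)) (-(Wm n))) {0} ∧
      ∀ a b : ℤ, Codes X (φ^[n]) (Set.Icc a b) {0} →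
        Set.Icc (-(Wp n)) (-(Wm n)) ⊆ Set.Icc a b := by
  classical
  obtain ⟨F, hFfin, hFspec⟩ := hSFT
  obtain ⟨x₀, hx₀⟩ := hinf.nonempty
  set M : ℕ := hFfin.toFinset.sup List.length with hMdef
  have hMle : ∀ w ∈ F, w.length ≤ M := fun w hw =>
    Finset.le_sup (hFfin.mem_toFinset.mpr hw)
  set c : ℕ := M - 2 with hcdef
  have hc2 : (M : ℤ) - 2 ≤ (c : ℤ) := by simp only [hcdef]; omega
  have hmaps := SFTAux.mapsTo_iter hφ
  have hsurj := SFTAux.surjOn_iter hφ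
  have hcomm : ∀ n, ∀ k : ℤ, ∀ x ∈ X, φ^[n] (zshift k x) = zshift k (φ^[n] x) :=
    fun n k => SFTAux.comm_iter hX hφ n k
  have hIci : ∀ n, Codes X (φ^[n]) (Set.Ici (-(Wp n))) {0} := by
    intro n
    have h0 : Codes X (φ^[n]) (Set.Ici 0) (Set.Ici (Wp n)) := (hWp n).1
    have h1 := SFTAux.codes_zshift hX (hcomm n) h0 (-(Wp n))
    refine SFTAux.codes_mono h1 ?_ ?_
    · intro m hm
      simp only [Set.mem_setOf_eq, Set.mem_Ici] at hm ⊢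
      linarith
    · intro m hm
      simp only [Set.mem_singleton_iff] at hm
      subst hm
      simp only [Set.mem_setOf_eq, Set.mem_Ici]
      linarith
  have hIic : ∀ n, Codes X (φ^[n]) (Set.Iic (-(Wm n))) {0} := by
    intro n
    have h0 : Codes X (φ^[n]) (Set.Iic 0) (Set.Iic (Wm n)) := (hWm n).1
    have h1 := SFTAux.codes_zshift hX (hcomm n) h0 (-(Wm n))
    refine SFTAux.codes_mono h1 ?_ ?_
    · intro m hm
      simp only [Set.mem_setOf_eq, Set.mem_Iic] at hm ⊢
      linarith
    · intro m hm
      simp only [Set.mem_singleton_iff] at hm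
      subst hm
      simp only [Set.mem_setOf_eq, Set.mem_Iic]
      linarith
  have hkey : ∀ (n : ℕ) (b : ℤ), -(Wp n) + (c : ℤ) ≤ b → -(Wm n) ≤ b →
      Codes X (φ^[n]) (Set.Icc (-(Wp n)) b) {0} := by
    intro n b hb1 hb2 x hx y hy hagree j hj
    have hj0 : j = 0 := hj
    subst hj0
    have hzX : (fun i => if i ≤ b then x i else y i) ∈ X :=
      SFTAux.glue_mem hFspec hMle hx hy (a := -(Wp n)) (by linarith) hagree
    set z : ℤ → A := fun i => if i ≤ b then x i else y i with hzdef
    have h1 : φ^[n] x 0 = φ^[n] z 0 := by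
      refine hIic n x hx z hzX (fun i hi => ?_) 0 rfl
      have hib : i ≤ b := le_trans hi hb2
      simp only [hzdef, if_pos hib]
    have h2 : φ^[n] z 0 = φ^[n] y 0 := by
      refine hIci n z hzX y hy (fun i hi => ?_) 0 rfl
      by_cases h : i ≤ b
      · simp only [hzdef, if_pos h]
        exact hagree i ⟨hi, h⟩
      · simp only [hzdef, if_neg h]
    exact h1.trans h2
  have hmin : ∀ (n : ℕ) (a b : ℤ), Codes X (φ^[n]) (Set.Icc a b) {0} →
      Set.Icc (-(Wp n)) (-(Wm n)) ⊆ Set.Icc a b := by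
    intro n a b hab
    have ha : Wp n ≤ -a := by
      have hmem : Codes X (φ^[n]) (Set.Ici 0) (Set.Ici (-a)) := by
        intro x hx y hy hagr j hj
        have hj' : -a ≤ j := hj
        have h1 := SFTAux.codes_zshift hX (hcomm n) hab j
        refine h1 x hx y hy (fun i hi => ?_) j ?_
        · simp only [Set.mem_setOf_eq, Set.mem_Icc] at hi
          exact hagr i (by simp only [Set.mem_Ici]; linarith [hi.1])
        · simp
      exact (hWp n).2 hmem
    have hb : -b ≤ Wm n := by
      have hmem : Codes X (φ^[n]) (Set.Iic 0) (Set.Iic (-b)) := by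
        intro x hx y hy hagr j hj
        have hj' : j ≤ -b := hj
        have h1 := SFTAux.codes_zshift hX (hcomm n) hab j
        refine h1 x hx y hy (fun i hi => ?_) j ?_
        · simp only [Set.mem_setOf_eq, Set.mem_Icc] at hi
          exact hagr i (by simp only [Set.mem_Iic]; linarith [hi.2])
        · simp
      exact (hWm n).2 hmem
    exact Set.Icc_subset_Icc (by linarith) (by linarith)
  by_cases hbig : ∃ n₀ : ℕ, ∀ n, n₀ ≤ n → (c : ℤ) ≤ Wp n - Wm n
  · obtain ⟨n₀, hn₀⟩ := hbig
    refine ⟨n₀, fun n hn => ⟨?_, fun a b hab => hmin n a b hab⟩⟩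
    exact hkey n (-(Wm n)) (by linarith [hn₀ n hn]) le_rfl
  · exfalso
    push_neg at hbig
    set B : Set ℕ := {n | Wp n - Wm n < (c : ℤ)} with hBdef
    have hBinf : B.Infinite := by
      apply Set.infinite_of_not_bddAbove
      rintro ⟨m, hm⟩
      obtain ⟨n, hn1, hn2⟩ := hbig (m + 1)
      have := hm (show n ∈ B from hn2)
      omega
    have hkey2 : ∀ n ∈ B, ∀ x ∈ X, ∀ j : ℤ,
        φ^[n] x j = SFTAux.fcode X (φ^[n]) c (Wp n) x₀ (fun i => x (j - Wp n + i)) := by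
      intro n hn x hx j
      have hnB : Wp n - Wm n < (c : ℤ) := hn
      have h0 : Codes X (φ^[n]) (Set.Icc (-(Wp n)) (-(Wp n) + (c : ℤ))) {0} :=
        hkey n _ le_rfl (by linarith)
      have h1 := SFTAux.codes_zshift hX (hcomm n) h0 (Wp n)
      have hcode : Codes X (φ^[n]) (Set.Icc 0 (c : ℤ)) {Wp n} := by
        refine SFTAux.codes_mono h1 ?_ ?_
        · intro m hm
          simp only [Set.mem_setOf_eq, Set.mem_Icc] at hm ⊢
          constructor <;> linarith [hm.1, hm.2]
        · intro m hm
          simp only [Set.mem_singleton_iff] at hm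
          subst hm
          simp
      exact SFTAux.fcode_spec hX (hcomm n) x₀ hcode x hx j
    haveI := hBinf.to_subtype
    obtain ⟨m₁, m₂, hne, heq⟩ := Finite.exists_ne_map_eq_of_infinite
      (fun n : B => SFTAux.fcode X (φ^[(n : ℕ)]) c (Wp n) x₀)
    have contra : ∀ (a b : B), (a : ℕ) < (b : ℕ) →
        SFTAux.fcode X (φ^[(a : ℕ)]) c (Wp a) x₀ =
          SFTAux.fcode X (φ^[(b : ℕ)]) c (Wp b) x₀ → False := by
      intro a b hab hfeq
      have hstep : ∀ x ∈ X, ∀ j : ℤ, φ^[(b : ℕ)] x j = φ^[(a : ℕ)] x (j - Wp b + Wp a) := by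
        intro x hx j
        rw [hkey2 b b.2 x hx j, hkey2 a a.2 x hx (j - Wp b + Wp a), hfeq]
        congr 1
        funext i
        congr 1
        ring
      apply hord
      refine ⟨(b : ℕ) - (a : ℕ), by omega, Wp a - Wp b, ?_⟩
      intro y hy
      obtain ⟨x, hxX, hfx⟩ := hsurj (a : ℕ) hy
      funext j
      have h1 : φ^[(b : ℕ)] x = φ^[(b : ℕ) - (a : ℕ)] (φ^[(a : ℕ)] x) := by
        rw [← Function.iterate_add_apply]
        congr 1
        omega
      calc φ^[(b : ℕ) - (a : ℕ)] y j = φ^[(b : ℕ)] x j := by rw [← hfx, h1]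
        _ = φ^[(a : ℕ)] x (j - Wp b + Wp a) := hstep x hxX j
        _ = zshift (Wp a - Wp b) y j := by
            rw [hfx]
            show y (j - Wp b + Wp a) = y (j + (Wp a - Wp b))
            congr 1
            ring
    rcases lt_or_gt_of_ne (fun h : (m₁ : ℕ) = (m₂ : ℕ) => hne (Subtype.ext h)) with h | h
    · exact contra m₁ m₂ h heq
    · exact contra m₂ m₁ h heq.symm
end
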